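/- arXiv:0910.3675 — 10 statements merged into one kernel-verified Lean document; each statement's English description precedes it below -/
import Mathlib

section
/- Let P and Q be orthogonal projections on a Hilbert space H such that Q - P has finite rank. Then the range R = (Q - P)(H) is an invariant subspace for both P and Q. -/
/-- A continuous linear operator has finite rank if its range is finite dimensional. -/
def FiniteRankOp {H : Type*} [NormedAddCommGroup H] [InnerProductSpace ℂ H]
    (T : H →L[ℂ] H) : Prop :=
  FiniteDimensional ℂ (LinearMap.range (T : H →ₗ[ℂ] H))

/-- If `P` and `Q` are orthogonal projections on a complex Hilbert space `H`
such that `Q - P` has finite rank, then the range `R = (Q - P)(H)` is an invariant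
subspace for both `P` and `Q`. -/
theorem range_diff_invariant
    {H : Type*} [NormedAddCommGroup H] [InnerProductSpace ℂ H] [CompleteSpace H]
    (P Q : H →L[ℂ] H)
    (hP_proj : P ∘L P = P) (hP_sa : IsSelfAdjoint P)
    (hQ_proj : Q ∘L Q = Q) (hQ_sa : IsSelfAdjoint Q)
    (hfin : FiniteRankOp (Q - P)) :
    ∀ x ∈ LinearMap.range ((Q - P : H →L[ℂ] H) : H →ₗ[ℂ] H),
      P x ∈ LinearMap.range ((Q - P : H →L[ℂ] H) : H →ₗ[ℂ] H) ∧
      Q x ∈ LinearMap.range ((Q - P : H →L[ℂ] H) : H →ₗ[ℂ] H) := by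
  rintro x ⟨y, rfl⟩
  have hP : ∀ z, P (P z) = P z := fun z => congrFun (congrArg DFunLike.coe hP_proj) z
  have hQ : ∀ z, Q (Q z) = Q z := fun z => congrFun (congrArg DFunLike.coe hQ_proj) z
  constructor
  · exact ⟨y - Q y, by simp [map_sub, hP, hQ]⟩
  · exact ⟨y - P y, by simp [map_sub, hP, hQ]⟩
end

section
/- Let P and Q be orthogonal projections on a Hilbert space H such that Q - P has finite rank. Then the trace of Q - P is an integer. -/
/-- The trace of a finite-rank operator, computed as the trace of its compression to
its (finite-dimensional) range.  For a finite-rank operator on a Hilbert space this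
agrees with the usual trace `∑ ⟨eᵢ, T eᵢ⟩`. -/
noncomputable def trFR {H : Type*} [NormedAddCommGroup H] [InnerProductSpace ℂ H]
    (T : H →L[ℂ] H) : ℂ :=
  LinearMap.trace ℂ (LinearMap.range (T : H →ₗ[ℂ] H))
    ((T : H →ₗ[ℂ] H).restrict fun x _ => LinearMap.mem_range_self _ x)

/-- The trace of an idempotent endomorphism of a finite-dimensional complex vector
space is a natural number. -/
lemma trace_idem_nat {V : Type*} [AddCommGroup V] [Module ℂ V] [FiniteDimensional ℂ V]
    (f : V →ₗ[ℂ] V) (hf : f ∘ₗ f = f) :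
    ∃ m : ℕ, LinearMap.trace ℂ V f = m := by
  obtain ⟨p, hp⟩ := (LinearMap.isProj_iff_isIdempotentElem f).mpr hf
  exact ⟨Module.finrank ℂ p, hp.trace⟩

/-- If `P` and `Q` are orthogonal projections on a complex Hilbert space
such that `Q - P` has finite rank, then the trace of `Q - P` is an integer. -/
theorem trace_proj_diff_int
    {H : Type*} [NormedAddCommGroup H] [InnerProductSpace ℂ H] [CompleteSpace H]
    (P Q : H →L[ℂ] H)
    (hP_proj : P ∘L P = P) (hP_sa : IsSelfAdjoint P)
    (hQ_proj : Q ∘L Q = Q) (hQ_sa : IsSelfAdjoint Q)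
    (hfin : FiniteRankOp (Q - P)) :
    ∃ n : ℤ, trFR (Q - P) = n := by
  classical
  haveI : FiniteDimensional ℂ (LinearMap.range ((Q - P : H →L[ℂ] H) : H →ₗ[ℂ] H)) := hfin
  have hPpt : ∀ x, P (P x) = P x := fun x => by
    rw [← ContinuousLinearMap.comp_apply, hP_proj]
  have hQpt : ∀ x, Q (Q x) = Q x := fun x => by
    rw [← ContinuousLinearMap.comp_apply, hQ_proj]
  -- key invariances: Q v ∈ range (Q - P) and P v ∈ range (Q - P)
  have hQmem : ∀ v ∈ LinearMap.range ((Q - P : H →L[ℂ] H) : H →ₗ[ℂ] H),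
      (Q : H →ₗ[ℂ] H) v ∈ LinearMap.range ((Q - P : H →L[ℂ] H) : H →ₗ[ℂ] H) := by
    rintro v ⟨y, rfl⟩
    have key : (Q : H →ₗ[ℂ] H) (((Q - P : H →L[ℂ] H) : H →ₗ[ℂ] H) y)
        = ((Q - P : H →L[ℂ] H) : H →ₗ[ℂ] H) y
          - ((Q - P : H →L[ℂ] H) : H →ₗ[ℂ] H) (P y) := by
      simp [map_sub, hQpt, hPpt]
    rw [key]
    exact sub_mem (LinearMap.mem_range_self _ _) (LinearMap.mem_range_self _ _)
  have hPmem : ∀ v ∈ LinearMap.range ((Q - P : H →L[ℂ] H) : H →ₗ[ℂ] H),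
      (P : H →ₗ[ℂ] H) v ∈ LinearMap.range ((Q - P : H →L[ℂ] H) : H →ₗ[ℂ] H) := by
    rintro v ⟨y, rfl⟩
    have key : (P : H →ₗ[ℂ] H) (((Q - P : H →L[ℂ] H) : H →ₗ[ℂ] H) y)
        = ((Q - P : H →L[ℂ] H) : H →ₗ[ℂ] H) y
          - ((Q - P : H →L[ℂ] H) : H →ₗ[ℂ] H) (Q y) := by
      simp [map_sub, hQpt, hPpt]
    rw [key]
    exact sub_mem (LinearMap.mem_range_self _ _) (LinearMap.mem_range_self _ _)
  set q := ((Q : H →ₗ[ℂ] H)).restrict hQmem with hq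
  set p := ((P : H →ₗ[ℂ] H)).restrict hPmem with hp
  have hqidem : q ∘ₗ q = q := by
    ext v
    simp [hq, LinearMap.restrict_apply, hQpt]
  have hpidem : p ∘ₗ p = p := by
    ext v
    simp [hp, LinearMap.restrict_apply, hPpt]
  have hsplit : (((Q - P : H →L[ℂ] H) : H →ₗ[ℂ] H).restrict
      fun x _ => LinearMap.mem_range_self _ x) = q - p := by
    ext v
    simp [hq, hp, LinearMap.restrict_apply]
  obtain ⟨m, hm⟩ := trace_idem_nat q hqidem
  obtain ⟨k, hk⟩ := trace_idem_nat p hpidem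
  refine ⟨(m : ℤ) - k, ?_⟩
  rw [trFR, hsplit, map_sub, hm, hk]
  push_cast
  ring
end

section
/- Let P and Q be orthogonal projections on a Hilbert space H such that Q - P has finite rank and Tr(Q - P) = 0. Then there exists a unitary V on H which acts as the identity on the orthogonal complement of the range of Q - P and satisfies Q = V* P V. -/
open Submodule Module

local notation "⟪" x ", " y "⟫" => @inner ℂ _ _ x y

theorem orthogonalProjection_add_orthogonalProjection_orthogonal {𝕜 E : Type*} [RCLike 𝕜]
    [NormedAddCommGroup E] [InnerProductSpace 𝕜 E] (K : Submodule 𝕜 E)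
    [K.HasOrthogonalProjection] (w : E) :
    (orthogonalProjection K w : E) + (orthogonalProjection Kᗮ w : E) = w := by
  have h := K.starProjection_add_starProjection_orthogonal w
  rw [Submodule.starProjection_apply, Submodule.starProjection_apply] at h
  exact h

/-- A symmetric idempotent linear map vanishes on the orthogonal complement of its range. -/
lemma symm_idem_apply_orthogonal_eq_zero {E : Type*} [NormedAddCommGroup E]
    [InnerProductSpace ℂ E] (f : E →ₗ[ℂ] E) (hidem : ∀ x, f (f x) = f x)
    (hsymm : ∀ x y, ⟪f x, y⟫ = ⟪x, f y⟫)
    {x : E} (hx : x ∈ (LinearMap.range f)ᗮ) : f x = 0 := by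
  have h1 : ⟪f x, f x⟫ = 0 := by
    rw [hsymm x (f x), hidem x]
    exact inner_left_of_mem_orthogonal (LinearMap.mem_range_self f x) hx
  exact inner_self_eq_zero.mp h1

/-- Glue two isometric equivalences along an orthogonal decomposition. -/
lemma glue_isometry {E : Type*} [NormedAddCommGroup E] [InnerProductSpace ℂ E]
    (K K' : Submodule ℂ E) [HasOrthogonalProjection K] [HasOrthogonalProjection K']
    (e : K ≃ₗᵢ[ℂ] K') (f : Kᗮ ≃ₗᵢ[ℂ] K'ᗮ) :
    ∃ W : E ≃ₗᵢ[ℂ] E, (∀ a : K, W a = e a) ∧ (∀ b : Kᗮ, W b = f b) := by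
  let w : E →ₗ[ℂ] E :=
    K'.subtype ∘ₗ (e.toLinearEquiv : K →ₗ[ℂ] K') ∘ₗ (orthogonalProjection K).toLinearMap +
    K'ᗮ.subtype ∘ₗ (f.toLinearEquiv : Kᗮ →ₗ[ℂ] K'ᗮ) ∘ₗ (orthogonalProjection Kᗮ).toLinearMap
  let w' : E →ₗ[ℂ] E :=
    K.subtype ∘ₗ (e.symm.toLinearEquiv : K' →ₗ[ℂ] K) ∘ₗ (orthogonalProjection K').toLinearMap +
    Kᗮ.subtype ∘ₗ (f.symm.toLinearEquiv : K'ᗮ →ₗ[ℂ] Kᗮ) ∘ₗ (orthogonalProjection K'ᗮ).toLinearMap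
  have hw : ∀ x, w x = ↑(e (orthogonalProjection K x)) + ↑(f (orthogonalProjection Kᗮ x)) :=
    fun x => rfl
  have hw' : ∀ x, w' x =
      ↑(e.symm (orthogonalProjection K' x)) + ↑(f.symm (orthogonalProjection K'ᗮ x)) :=
    fun x => rfl
  have hprojK : ∀ (a : K) (b : Kᗮ), orthogonalProjection K (↑a + ↑b) = a := by
    intro a b
    rw [map_add, orthogonalProjection_mem_subspace_eq_self,
      orthogonalProjection_mem_subspace_orthogonalComplement_eq_zero b.2, add_zero]
  have hprojKp : ∀ (a : K) (b : Kᗮ), orthogonalProjection Kᗮ (↑a + ↑b) = b := by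
    intro a b
    rw [map_add, orthogonalProjection_mem_subspace_eq_self,
      orthogonalProjection_mem_subspace_orthogonalComplement_eq_zero
        (K.le_orthogonal_orthogonal a.2), zero_add]
  have hprojK' : ∀ (a : K') (b : K'ᗮ), orthogonalProjection K' (↑a + ↑b) = a := by
    intro a b
    rw [map_add, orthogonalProjection_mem_subspace_eq_self,
      orthogonalProjection_mem_subspace_orthogonalComplement_eq_zero b.2, add_zero]
  have hprojK'p : ∀ (a : K') (b : K'ᗮ), orthogonalProjection K'ᗮ (↑a + ↑b) = b := by
    intro a b
    rw [map_add, orthogonalProjection_mem_subspace_eq_self,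
      orthogonalProjection_mem_subspace_orthogonalComplement_eq_zero
        (K'.le_orthogonal_orthogonal a.2), zero_add]
  have hcomp1 : ∀ x, w' (w x) = x := by
    intro x
    rw [hw x, hw', hprojK' (e _) (f _), hprojK'p (e _) (f _),
      LinearIsometryEquiv.symm_apply_apply, LinearIsometryEquiv.symm_apply_apply,
      orthogonalProjection_add_orthogonalProjection_orthogonal]
  have hcomp2 : ∀ x, w (w' x) = x := by
    intro x
    rw [hw' x, hw, hprojK (e.symm _) (f.symm _), hprojKp (e.symm _) (f.symm _),
      LinearIsometryEquiv.apply_symm_apply, LinearIsometryEquiv.apply_symm_apply,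
      orthogonalProjection_add_orthogonalProjection_orthogonal]
  have key : ∀ (a c : K) (b d : Kᗮ),
      ⟪((e a : E) + (f b : E)), ((e c : E) + (f d : E))⟫ = ⟪((a : E) + (b : E)), ((c : E) + (d : E))⟫ := by
    intro a c b d
    simp only [inner_add_left, inner_add_right]
    rw [inner_right_of_mem_orthogonal (e a).2 (f d).2,
      inner_left_of_mem_orthogonal (e c).2 (f b).2,
      inner_right_of_mem_orthogonal a.2 d.2, inner_left_of_mem_orthogonal c.2 b.2]
    have h1 : ⟪((e a : K') : E), ((e c : K') : E)⟫ = ⟪(a : E), (c : E)⟫ := by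
      rw [← Submodule.coe_inner, ← Submodule.coe_inner, e.inner_map_map]
    have h2 : ⟪((f b : K'ᗮ) : E), ((f d : K'ᗮ) : E)⟫ = ⟪(b : E), (d : E)⟫ := by
      rw [← Submodule.coe_inner, ← Submodule.coe_inner, f.inner_map_map]
    rw [h1, h2]
  have hinner : ∀ x y, ⟪w x, w y⟫ = ⟪x, y⟫ := by
    intro x y
    conv_rhs => rw [← orthogonalProjection_add_orthogonalProjection_orthogonal K x,
      ← orthogonalProjection_add_orthogonalProjection_orthogonal K y]
    rw [hw x, hw y]
    exact key _ _ _ _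
  refine ⟨(LinearEquiv.ofLinear w w' (by ext x; simpa using hcomp2 x)
      (by ext x; simpa using hcomp1 x)).isometryOfInner hinner, ?_, ?_⟩
  · intro a
    show w ↑a = ↑(e a)
    rw [hw, orthogonalProjection_mem_subspace_eq_self,
      orthogonalProjection_mem_subspace_orthogonalComplement_eq_zero
        (K.le_orthogonal_orthogonal a.2), map_zero, Submodule.coe_zero, add_zero]
  · intro b
    show w ↑b = ↑(f b)
    rw [hw, orthogonalProjection_mem_subspace_eq_self,
      orthogonalProjection_mem_subspace_orthogonalComplement_eq_zero b.2,
      map_zero, Submodule.coe_zero, zero_add]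

/-- Two finite-dimensional complex inner product spaces of equal dimension are isometric. -/
lemma exists_isometry_of_finrank_eq {E F : Type*} [NormedAddCommGroup E] [InnerProductSpace ℂ E]
    [NormedAddCommGroup F] [InnerProductSpace ℂ F] [FiniteDimensional ℂ E] [FiniteDimensional ℂ F]
    (h : finrank ℂ E = finrank ℂ F) : Nonempty (E ≃ₗᵢ[ℂ] F) :=
  ⟨(stdOrthonormalBasis ℂ E).repr.trans
    ((stdOrthonormalBasis ℂ F).reindex (finCongr h.symm)).repr.symm⟩
set_option maxHeartbeats 2000000 in
/-- If `P`, `Q` are orthogonal projections on a complex Hilbert space with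
`Q - P` of finite rank and `Tr(Q - P) = 0`, then there is a unitary `V` acting as the
identity on the orthogonal complement of the range of `Q - P` with `Q = V* P V`. -/
theorem exists_unitary_conjugating_projections
    {H : Type*} [NormedAddCommGroup H] [InnerProductSpace ℂ H] [CompleteSpace H]
    (P Q : H →L[ℂ] H)
    (hP_proj : P ∘L P = P) (hP_sa : IsSelfAdjoint P)
    (hQ_proj : Q ∘L Q = Q) (hQ_sa : IsSelfAdjoint Q)
    (hfin : FiniteRankOp (Q - P))
    (htr : trFR (Q - P) = 0) :
    ∃ V ∈ unitary (H →L[ℂ] H),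
      (∀ x ∈ (LinearMap.range ((Q - P : H →L[ℂ] H) : H →ₗ[ℂ] H))ᗮ, V x = x) ∧
      Q = star V * P * V := by
  classical
  let T : H →L[ℂ] H := Q - P
  let Tl : H →ₗ[ℂ] H := (T : H →ₗ[ℂ] H)
  let R : Submodule ℂ H := LinearMap.range Tl
  haveI hfd : FiniteDimensional ℂ R := hfin
  -- symmetry of the operators
  have hPs : ∀ x y : H, ⟪P x, y⟫ = ⟪x, P y⟫ := fun x y =>
    (ContinuousLinearMap.isSelfAdjoint_iff_isSymmetric.mp hP_sa) x y
  have hQs : ∀ x y : H, ⟪Q x, y⟫ = ⟪x, Q y⟫ := fun x y =>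
    (ContinuousLinearMap.isSelfAdjoint_iff_isSymmetric.mp hQ_sa) x y
  have hTs : ∀ x y : H, ⟪T x, y⟫ = ⟪x, T y⟫ := fun x y =>
    (ContinuousLinearMap.isSelfAdjoint_iff_isSymmetric.mp (hQ_sa.sub hP_sa)) x y
  -- the algebraic identity T(P+Q) + (P+Q)T = 2T
  have hp : P * P = P := hP_proj
  have hq : Q * Q = Q := hQ_proj
  have halg : T * (P + Q) + (P + Q) * T = T + T := by
    show (Q - P) * (P + Q) + (P + Q) * (Q - P) = (Q - P) + (Q - P)
    simp only [mul_add, add_mul, sub_mul, mul_sub, hp, hq]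
    abel
  -- invariance of the kernel of T under P and Q
  have hker_inv : ∀ z : H, T z = 0 → T (P z) = 0 ∧ T (Q z) = 0 := by
    intro z hz
    have h1 : T (P z) + T (Q z) = 0 := by
      have h := congrArg (fun S : H →L[ℂ] H => S z) halg
      simp only [ContinuousLinearMap.add_apply, ContinuousLinearMap.mul_apply, hz, map_zero,
        map_add, add_zero, zero_add] at h
      simpa using h
    have h2 : T (Q z) = T (P z) := by
      have h3 : T (Q z - P z) = 0 := by
        have h4 : Q z - P z = T z := (ContinuousLinearMap.sub_apply Q P z).symm
        rw [h4, hz, map_zero]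
      rw [map_sub, sub_eq_zero] at h3
      exact h3
    have hPz : T (P z) = 0 := by
      rw [h2] at h1
      have h6 : (2 : ℂ) • T (P z) = 0 := by rw [two_smul]; exact h1
      simpa using h6
    exact ⟨hPz, by rw [h2]; exact hPz⟩
  -- Rᗮ = ker T
  have hmem_orth : ∀ z : H, T z = 0 → z ∈ Rᗮ := by
    intro z hz
    rw [Submodule.mem_orthogonal]
    rintro u ⟨y, rfl⟩
    show ⟪T y, z⟫ = 0
    rw [hTs y z, hz, inner_zero_right]
  have horth_ker : ∀ w : H, w ∈ Rᗮ → T w = 0 := by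
    intro w hw
    have h0 : ⟪T (T w), w⟫ = 0 :=
      (Submodule.mem_orthogonal R w).mp hw (Tl (T w)) (LinearMap.mem_range_self Tl (T w))
    rw [hTs (T w) w] at h0
    exact inner_self_eq_zero.mp h0
  -- invariance of Rᗮ under P and Q
  have hPperp : ∀ w : H, w ∈ Rᗮ → P w ∈ Rᗮ := fun w hw =>
    hmem_orth _ (hker_inv w (horth_ker w hw)).1
  have hQperp : ∀ w : H, w ∈ Rᗮ → Q w ∈ Rᗮ := fun w hw =>
    hmem_orth _ (hker_inv w (horth_ker w hw)).2
  -- invariance of R under P and Q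
  haveI : HasOrthogonalProjection R := by infer_instance
  have hRR : Rᗮᗮ = R := Submodule.orthogonal_orthogonal R
  have hPR : ∀ x ∈ R, P x ∈ R := by
    intro x hx
    rw [← hRR, Submodule.mem_orthogonal]
    intro u hu
    rw [← hPs u x]
    exact inner_left_of_mem_orthogonal hx (hPperp u hu)
  have hQR : ∀ x ∈ R, Q x ∈ R := by
    intro x hx
    rw [← hRR, Submodule.mem_orthogonal]
    intro u hu
    rw [← hQs u x]
    exact inner_left_of_mem_orthogonal hx (hQperp u hu)
  -- restrictions of P and Q to R
  let P' : R →ₗ[ℂ] R := (P : H →ₗ[ℂ] H).restrict hPR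
  let Q' : R →ₗ[ℂ] R := (Q : H →ₗ[ℂ] H).restrict hQR
  have hP'coe : ∀ a : R, (↑(P' a) : H) = P ↑a := fun a => rfl
  have hQ'coe : ∀ a : R, (↑(Q' a) : H) = Q ↑a := fun a => rfl
  have hP'idem : ∀ a : R, P' (P' a) = P' a := by
    intro a
    apply Subtype.ext
    simp only [hP'coe]
    have := DFunLike.congr_fun hP_proj (↑a : H)
    simpa using this
  have hQ'idem : ∀ a : R, Q' (Q' a) = Q' a := by
    intro a
    apply Subtype.ext
    simp only [hQ'coe]
    have := DFunLike.congr_fun hQ_proj (↑a : H)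
    simpa using this
  have hP'sym : ∀ a b : R, ⟪P' a, b⟫ = ⟪a, P' b⟫ := by
    intro a b
    rw [Submodule.coe_inner, Submodule.coe_inner, hP'coe, hP'coe]
    exact hPs ↑a ↑b
  have hQ'sym : ∀ a b : R, ⟪Q' a, b⟫ = ⟪a, Q' b⟫ := by
    intro a b
    rw [Submodule.coe_inner, Submodule.coe_inner, hQ'coe, hQ'coe]
    exact hQs ↑a ↑b
  let K₁ : Submodule ℂ R := LinearMap.range Q'
  let K₂ : Submodule ℂ R := LinearMap.range P'
  have hK1 : ∀ z : R, z ∈ K₁ → Q' z = z := by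
    rintro z ⟨y, rfl⟩
    exact hQ'idem y
  have hK2 : ∀ z : R, z ∈ K₂ → P' z = z := by
    rintro z ⟨y, rfl⟩
    exact hP'idem y
  -- the trace computation: finrank K₁ = finrank K₂
  have htr0 : LinearMap.trace ℂ R (Tl.restrict fun x _ => LinearMap.mem_range_self _ x) = 0 := htr
  have hres : (Tl.restrict fun x _ => LinearMap.mem_range_self _ x : R →ₗ[ℂ] R) = Q' - P' := by
    apply LinearMap.ext
    intro x
    apply Subtype.ext
    rw [LinearMap.restrict_coe_apply, LinearMap.sub_apply, AddSubgroupClass.coe_sub, hQ'coe,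
      hP'coe]
    show T ↑x = Q ↑x - P ↑x
    exact ContinuousLinearMap.sub_apply Q P ↑x
  have hQ'proj : LinearMap.IsProj K₁ Q' :=
    ⟨fun x => LinearMap.mem_range_self _ x, fun x hx => hK1 x hx⟩
  have hP'proj : LinearMap.IsProj K₂ P' :=
    ⟨fun x => LinearMap.mem_range_self _ x, fun x hx => hK2 x hx⟩
  have hrk : Module.finrank ℂ K₁ = Module.finrank ℂ K₂ := by
    have h := htr0
    rw [hres, map_sub, hQ'proj.trace, hP'proj.trace] at h
    exact_mod_cast sub_eq_zero.mp h
  have hrkp : Module.finrank ℂ (K₁ᗮ : Submodule ℂ R) = Module.finrank ℂ (K₂ᗮ : Submodule ℂ R) := by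
    have h1 := Submodule.finrank_add_finrank_orthogonal K₁
    have h2 := Submodule.finrank_add_finrank_orthogonal K₂
    omega
  obtain ⟨e⟩ := exists_isometry_of_finrank_eq (E := K₁) (F := K₂) hrk
  obtain ⟨f⟩ := exists_isometry_of_finrank_eq (E := (K₁ᗮ : Submodule ℂ R))
    (F := (K₂ᗮ : Submodule ℂ R)) hrkp
  obtain ⟨U, hU1, hU2⟩ := glue_isometry K₁ K₂ e f
  obtain ⟨W, hW1, hW2⟩ := glue_isometry R R U (LinearIsometryEquiv.refl ℂ Rᗮ)
  have hW2' : ∀ b : Rᗮ, W ↑b = ↑b := fun b => by simpa using hW2 b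
  -- the unitary
  let Vu := Unitary.linearIsometryEquiv.symm W
  refine ⟨(Vu : H →L[ℂ] H), Vu.2, ?_, ?_⟩
  · intro x hx
    exact hW2' ⟨x, hx⟩
  · -- the conjugation identity
    have claimR : ∀ r : R, P (W ↑r) = W (Q ↑r) := by
      intro r
      have hd := orthogonalProjection_add_orthogonalProjection_orthogonal K₁ r
      set a : K₁ := orthogonalProjection K₁ r with ha
      set b : (K₁ᗮ : Submodule ℂ R) := orthogonalProjection K₁ᗮ r with hb
      have hQ'r : Q' r = ↑a := by
        conv_lhs => rw [← hd]
        rw [map_add, hK1 _ a.2,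
          symm_idem_apply_orthogonal_eq_zero Q' hQ'idem hQ'sym b.2, add_zero]
      have hP'Ur : P' (U r) = U ↑a := by
        conv_lhs => rw [← hd]
        rw [map_add, map_add, hU1 a, hU2 b, hK2 _ (e a).2,
          symm_idem_apply_orthogonal_eq_zero P' hP'idem hP'sym (f b).2, add_zero]
      rw [hW1 r, ← hP'coe (U r), hP'Ur, ← hQ'coe r, hQ'r, hW1 (↑a : R)]
    have claimP : ∀ w : Rᗮ, P (W ↑w) = W (Q ↑w) := by
      intro w
      have hw0 : T ↑w = 0 := horth_ker ↑w w.2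
      have hQP : Q ↑w = P ↑w := by
        have h5 : Q ↑w - P ↑w = 0 := by
          rw [← ContinuousLinearMap.sub_apply]
          exact hw0
        exact sub_eq_zero.mp h5
      have hPw : P ↑w ∈ Rᗮ := hPperp ↑w w.2
      rw [hW2' w, hQP]
      exact (hW2' ⟨P ↑w, hPw⟩).symm
    have hPVVQ : P * (Vu : H →L[ℂ] H) = (Vu : H →L[ℂ] H) * Q := by
      ext x
      show P ((Vu : H →L[ℂ] H) x) = (Vu : H →L[ℂ] H) (Q x)
      have hVW : ∀ y, (Vu : H →L[ℂ] H) y = W y := fun y => rfl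
      rw [hVW, hVW]
      conv_lhs => rw [← orthogonalProjection_add_orthogonalProjection_orthogonal R x]
      conv_rhs => rw [← orthogonalProjection_add_orthogonalProjection_orthogonal R x]
      rw [map_add W, map_add P, map_add Q, map_add W, claimR, claimP]
    have hstar : star (Vu : H →L[ℂ] H) * (Vu : H →L[ℂ] H) = 1 :=
      Unitary.star_mul_self_of_mem Vu.2
    calc Q = 1 * Q := (one_mul Q).symm
      _ = (star (Vu : H →L[ℂ] H) * (Vu : H →L[ℂ] H)) * Q := by rw [hstar]
      _ = star (Vu : H →L[ℂ] H) * ((Vu : H →L[ℂ] H) * Q) := by rw [mul_assoc]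
      _ = star (Vu : H →L[ℂ] H) * (P * (Vu : H →L[ℂ] H)) := by rw [hPVVQ]
      _ = star (Vu : H →L[ℂ] H) * P * (Vu : H →L[ℂ] H) := by rw [mul_assoc]
end

section
/- Let U be a unitary operator on a Hilbert space H and P an orthogonal projection such that the commutator [P, U] has finite rank. Then U*PU - P has finite rank and Tr(U*PU - P) is an integer. -/
/-- Auxiliary: trFR equals the trace of the restriction to any finite-dimensional
submodule containing the range. -/
lemma trFR_eq_trace_restrict {H : Type*} [NormedAddCommGroup H] [InnerProductSpace ℂ H]
    (T : H →L[ℂ] H) (W : Submodule ℂ H) [FiniteDimensional ℂ W]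
    (hW : LinearMap.range (T : H →ₗ[ℂ] H) ≤ W) :
    trFR T = LinearMap.trace ℂ W
      ((T : H →ₗ[ℂ] H).restrict (fun x _ => hW (LinearMap.mem_range_self _ x))) := by
  classical
  set t : H →ₗ[ℂ] H := (T : H →ₗ[ℂ] H)
  set V : Submodule ℂ H := LinearMap.range t with hV
  haveI : FiniteDimensional ℂ V := Submodule.finiteDimensional_of_le hW
  set g : W →ₗ[ℂ] W := t.restrict (fun x _ => hW (LinearMap.mem_range_self _ x)) with hg
  set p : Submodule ℂ W := V.comap W.subtype with hp
  have hgp : ∀ x : W, g x ∈ p := fun x => LinearMap.mem_range_self t (x : H)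
  have hgp' : ∀ x ∈ p, g x ∈ p := fun x _ => hgp x
  let e : p ≃ₗ[ℂ] V := Submodule.comapSubtypeEquivOfLe hW
  have key : (t.restrict fun x _ => LinearMap.mem_range_self t x : V →ₗ[ℂ] V)
      = e.conj (g.restrict hgp') := by
    ext x
    have : ((e.conj (g.restrict hgp')) x : H) = t (x : H) := by
      simp only [LinearEquiv.conj_apply, LinearMap.coe_comp, Function.comp_apply,
        LinearEquiv.coe_coe]
      rfl
    simpa [LinearMap.restrict_apply] using this.symm
  rw [trFR]
  rw [key, LinearMap.trace_conj']
  exact LinearMap.trace_restrict_eq_of_forall_mem p g hgp hgp'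

/-- If `U` is unitary, `P` an orthogonal projection, and the commutator
`[P, U] = P U - U P` has finite rank, then `U* P U - P` has finite rank and its trace
(the index of the quantum walk `U`) is an integer. -/
theorem index_is_integer
    {H : Type*} [NormedAddCommGroup H] [InnerProductSpace ℂ H] [CompleteSpace H]
    (U P : H →L[ℂ] H) (hU : U ∈ unitary (H →L[ℂ] H))
    (hP_proj : P ∘L P = P) (hP_sa : IsSelfAdjoint P)
    (hfin : FiniteRankOp (P * U - U * P)) :
    FiniteRankOp (star U * P * U - P) ∧ ∃ n : ℤ, trFR (star U * P * U - P) = n := by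
  classical
  obtain ⟨hU1, hU2⟩ := hU
  have hPP : P * P = P := hP_proj
  -- The key algebraic identity
  have hA_eq : star U * P * U - P = star U * (P * U - U * P) := by
    rw [mul_sub, ← mul_assoc, ← mul_assoc, hU1, one_mul]
  set A : H →L[ℂ] H := star U * P * U - P with hAdef
  set Q : H →L[ℂ] H := star U * P * U with hQdef
  have hQQ : Q * Q = Q := by
    calc Q * Q = star U * (P * ((U * star U) * (P * U))) := by
          simp only [hQdef, mul_assoc]
      _ = Q := by
          rw [hU2, one_mul, ← mul_assoc P P U, hPP, hQdef, mul_assoc]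
  -- linear map versions
  set a : H →ₗ[ℂ] H := (A : H →ₗ[ℂ] H) with ha
  set p : H →ₗ[ℂ] H := (P : H →ₗ[ℂ] H) with hpdef
  set q : H →ₗ[ℂ] H := (Q : H →ₗ[ℂ] H) with hqdef
  have hax : ∀ x, a x = q x - p x := by
    intro x
    have : A = Q - P := rfl
    simp [ha, this, hqdef, hpdef]
  have hppx : ∀ x, p (p x) = p x := fun x => congrArg (fun T : H →L[ℂ] H => T x) hPP
  have hqqx : ∀ x, q (q x) = q x := fun x => congrArg (fun T : H →L[ℂ] H => T x) hQQ
  -- finite rank of A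
  have hrange : LinearMap.range a ≤
      Submodule.map ((star U : H →L[ℂ] H) : H →ₗ[ℂ] H)
        (LinearMap.range ((P * U - U * P : H →L[ℂ] H) : H →ₗ[ℂ] H)) := by
    rintro _ ⟨x, rfl⟩
    refine ⟨(P * U - U * P) x, LinearMap.mem_range_self _ x, ?_⟩
    have := congrArg (fun T : H →L[ℂ] H => T x) hA_eq
    simpa [ha] using this.symm
  haveI hfin' : FiniteDimensional ℂ (LinearMap.range ((P * U - U * P : H →L[ℂ] H) : H →ₗ[ℂ] H)) :=
    hfin
  haveI : FiniteDimensional ℂ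
      (Submodule.map ((star U : H →L[ℂ] H) : H →ₗ[ℂ] H)
        (LinearMap.range ((P * U - U * P : H →L[ℂ] H) : H →ₗ[ℂ] H))) :=
    Module.Finite.map _ _
  haveI hVfin : FiniteDimensional ℂ (LinearMap.range a) :=
    Submodule.finiteDimensional_of_le hrange
  refine ⟨hVfin, ?_⟩
  -- the invariant subspace W
  set V : Submodule ℂ H := LinearMap.range a with hV
  set W : Submodule ℂ H := V ⊔ V.map p ⊔ V.map q with hW
  haveI : FiniteDimensional ℂ (V.map p) := Module.Finite.map _ _
  haveI : FiniteDimensional ℂ (V.map q) := Module.Finite.map _ _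
  haveI : FiniteDimensional ℂ W := by
    rw [hW]
    infer_instance
  have hVW : V ≤ W := le_trans le_sup_left le_sup_left
  have hPVW : V.map p ≤ W := le_trans le_sup_right le_sup_left
  have hQVW : V.map q ≤ W := le_sup_right
  have haW : ∀ x ∈ W, a x ∈ W := fun x _ => hVW (LinearMap.mem_range_self a x)
  have hqx : ∀ x, q x = p x + a x := fun x => by rw [hax]; abel
  have hPW : ∀ x ∈ W, p x ∈ W := by
    intro x hx
    rw [hW, sup_assoc] at hx
    obtain ⟨v, hv, w, hw, rfl⟩ := Submodule.mem_sup.mp hx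
    obtain ⟨w1, hw1, w2, hw2, rfl⟩ := Submodule.mem_sup.mp hw
    rw [map_add, map_add]
    refine add_mem ?_ (add_mem ?_ ?_)
    · exact hPVW ⟨v, hv, rfl⟩
    · obtain ⟨y, hy, rfl⟩ := hw1
      rw [hppx]
      exact hPVW ⟨y, hy, rfl⟩
    · obtain ⟨y, hy, rfl⟩ := hw2
      rw [hqx, map_add, hppx]
      exact add_mem (hPVW ⟨y, hy, rfl⟩)
        (hPVW ⟨a y, LinearMap.mem_range_self a y, rfl⟩)
  have hQW : ∀ x ∈ W, q x ∈ W := by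
    intro x hx
    rw [hW, sup_assoc] at hx
    obtain ⟨v, hv, w, hw, rfl⟩ := Submodule.mem_sup.mp hx
    obtain ⟨w1, hw1, w2, hw2, rfl⟩ := Submodule.mem_sup.mp hw
    rw [map_add, map_add]
    refine add_mem ?_ (add_mem ?_ ?_)
    · exact hQVW ⟨v, hv, rfl⟩
    · obtain ⟨y, hy, rfl⟩ := hw1
      rw [hqx, hppx]
      exact add_mem (hPVW ⟨y, hy, rfl⟩) (hVW (LinearMap.mem_range_self a _))
    · obtain ⟨y, hy, rfl⟩ := hw2
      rw [hqqx]
      exact hQVW ⟨y, hy, rfl⟩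
  -- restrictions to W
  set fp : W →ₗ[ℂ] W := p.restrict hPW with hfp
  set fq : W →ₗ[ℂ] W := q.restrict hQW with hfq
  set fa : W →ₗ[ℂ] W := a.restrict haW with hfa
  have hfa_eq : fa = fq - fp := by
    ext x
    simp only [hfa, hfq, hfp, LinearMap.sub_apply, AddSubgroupClass.coe_sub,
      LinearMap.restrict_coe_apply]
    exact hax (x : H)
  -- projections on W and their traces
  have hfp_proj : LinearMap.IsProj (LinearMap.range fp) fp := by
    refine ⟨fun x => LinearMap.mem_range_self _ x, ?_⟩
    rintro _ ⟨y, rfl⟩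
    exact Subtype.ext (by simp only [hfp, LinearMap.restrict_coe_apply]; exact hppx (y : H))
  have hfq_proj : LinearMap.IsProj (LinearMap.range fq) fq := by
    refine ⟨fun x => LinearMap.mem_range_self _ x, ?_⟩
    rintro _ ⟨y, rfl⟩
    exact Subtype.ext (by simp only [hfq, LinearMap.restrict_coe_apply]; exact hqqx (y : H))
  have htrp : LinearMap.trace ℂ W fp = (Module.finrank ℂ (LinearMap.range fp) : ℂ) :=
    hfp_proj.trace
  have htrq : LinearMap.trace ℂ W fq = (Module.finrank ℂ (LinearMap.range fq) : ℂ) :=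
    hfq_proj.trace
  have hmain : trFR A = LinearMap.trace ℂ W fa := by
    have := trFR_eq_trace_restrict A W (by rw [← ha, ← hV]; exact hVW)
    convert this using 2
  refine ⟨(Module.finrank ℂ (LinearMap.range fq) : ℤ) -
    (Module.finrank ℂ (LinearMap.range fp) : ℤ), ?_⟩
  rw [hmain, hfa_eq, map_sub, htrp, htrq]
  push_cast
  ring
end

section
/- Let U₁, U₂ be unitary operators on a Hilbert space H and P an orthogonal projection such that both [P,U₁] and [P,U₂] have finite rank. Then ind(U₁U₂) = ind(U₁) + ind(U₂), where ind(U) = Tr(U*PU - P). -/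
/-- The index of a quantum walk `U` relative to the half-line projection `P`:
`ind U = Tr(U* P U - P)`. -/
noncomputable def ind {H : Type*} [NormedAddCommGroup H] [InnerProductSpace ℂ H]
    [CompleteSpace H] (P U : H →L[ℂ] H) : ℂ :=
  trFR (star U * P * U - P)

section Aux

variable {H : Type*} [NormedAddCommGroup H] [InnerProductSpace ℂ H] [CompleteSpace H]

/-- The trace of the compression of `T` to any finite-dimensional subspace containing its
range coincides with `trFR T`. -/
lemma trFR_eq_trace (T : H →L[ℂ] H) (W : Submodule ℂ H) [FiniteDimensional ℂ W]
    (h : ∀ x, T x ∈ W) :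
    trFR T = LinearMap.trace ℂ W ((T : H →ₗ[ℂ] H).restrict fun x _ => h x) := by
  set R := LinearMap.range (T : H →ₗ[ℂ] H) with hR
  have hRW : R ≤ W := by rintro _ ⟨x, rfl⟩; exact h x
  haveI : FiniteDimensional ℂ R := Submodule.finiteDimensional_of_le hRW
  let f : R →ₗ[ℂ] W := Submodule.inclusion hRW
  let g : W →ₗ[ℂ] R :=
    ((T : H →ₗ[ℂ] H).domRestrict W).codRestrict R fun x => ⟨(x : H), rfl⟩
  have h1 : (T : H →ₗ[ℂ] H).restrict (fun x _ => h x) = f ∘ₗ g := by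
    ext x; rfl
  have h2 : ((T : H →ₗ[ℂ] H).restrict fun x _ => LinearMap.mem_range_self _ x) = g ∘ₗ f := by
    ext x; rfl
  rw [trFR, h2, h1, LinearMap.trace_comp_comm']

lemma finiteRankOp_mul_left (A B : H →L[ℂ] H) (hB : FiniteRankOp B) :
    FiniteRankOp (A * B) := by
  have : LinearMap.range ((A * B : H →L[ℂ] H) : H →ₗ[ℂ] H)
      = (LinearMap.range (B : H →ₗ[ℂ] H)).map (A : H →ₗ[ℂ] H) := by
    rw [← LinearMap.range_comp]; rfl
  rw [FiniteRankOp, this]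
  haveI : FiniteDimensional ℂ (LinearMap.range (B : H →ₗ[ℂ] H)) := hB
  exact Module.Finite.map _ _

lemma finiteRankOp_mul_right (A B : H →L[ℂ] H) (hA : FiniteRankOp A) :
    FiniteRankOp (A * B) := by
  haveI : FiniteDimensional ℂ (LinearMap.range (A : H →ₗ[ℂ] H)) := hA
  have hle : LinearMap.range ((A * B : H →L[ℂ] H) : H →ₗ[ℂ] H)
      ≤ LinearMap.range (A : H →ₗ[ℂ] H) := by
    rintro _ ⟨x, rfl⟩; exact ⟨B x, rfl⟩
  exact Submodule.finiteDimensional_of_le hle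

lemma finiteRankOp_add (A B : H →L[ℂ] H) (hA : FiniteRankOp A) (hB : FiniteRankOp B) :
    FiniteRankOp (A + B) := by
  haveI : FiniteDimensional ℂ (LinearMap.range (A : H →ₗ[ℂ] H)) := hA
  haveI : FiniteDimensional ℂ (LinearMap.range (B : H →ₗ[ℂ] H)) := hB
  have hle : LinearMap.range ((A + B : H →L[ℂ] H) : H →ₗ[ℂ] H)
      ≤ LinearMap.range (A : H →ₗ[ℂ] H) ⊔ LinearMap.range (B : H →ₗ[ℂ] H) := by
    rintro _ ⟨x, rfl⟩
    exact Submodule.add_mem_sup (LinearMap.mem_range_self _ x) (LinearMap.mem_range_self _ x)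
  exact Submodule.finiteDimensional_of_le hle

lemma trFR_add (A B : H →L[ℂ] H) (hA : FiniteRankOp A) (hB : FiniteRankOp B) :
    trFR (A + B) = trFR A + trFR B := by
  haveI : FiniteDimensional ℂ (LinearMap.range (A : H →ₗ[ℂ] H)) := hA
  haveI : FiniteDimensional ℂ (LinearMap.range (B : H →ₗ[ℂ] H)) := hB
  set W := LinearMap.range (A : H →ₗ[ℂ] H) ⊔ LinearMap.range (B : H →ₗ[ℂ] H) with hW
  have hAW : ∀ x, A x ∈ W := fun x =>
    le_sup_left (α := Submodule ℂ H) (LinearMap.mem_range_self _ x)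
  have hBW : ∀ x, B x ∈ W := fun x =>
    le_sup_right (α := Submodule ℂ H) (LinearMap.mem_range_self _ x)
  have hABW : ∀ x, (A + B) x ∈ W := fun x => by
    have : (A + B) x = A x + B x := rfl
    rw [this]; exact add_mem (hAW x) (hBW x)
  rw [trFR_eq_trace A W hAW, trFR_eq_trace B W hBW, trFR_eq_trace (A + B) W hABW]
  have : ((A + B : H →L[ℂ] H) : H →ₗ[ℂ] H).restrict (p := W) (q := W) (fun x _ => hABW x)
      = (A : H →ₗ[ℂ] H).restrict (p := W) (q := W) (fun x _ => hAW x)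
        + (B : H →ₗ[ℂ] H).restrict (p := W) (q := W) (fun x _ => hBW x) := by
    ext x; rfl
  rw [this, map_add]

/-- Invariance of the finite-rank trace under unitary conjugation. -/
lemma trFR_conj (U T : H →L[ℂ] H) (hU : U ∈ unitary (H →L[ℂ] H)) (hT : FiniteRankOp T) :
    trFR (star U * T * U) = trFR T := by
  have hUsU : star U * U = 1 := hU.1
  have hUUs : U * star U = 1 := hU.2
  set R := LinearMap.range (T : H →ₗ[ℂ] H) with hRdef
  haveI : FiniteDimensional ℂ R := hT
  -- `star U` as a linear equivalence
  let e0 : H ≃ₗ[ℂ] H := LinearEquiv.ofLinear ((star U : H →L[ℂ] H) : H →ₗ[ℂ] H)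
    ((U : H →L[ℂ] H) : H →ₗ[ℂ] H)
    (by ext x; exact DFunLike.congr_fun (congrArg (ContinuousLinearMap.toLinearMap) hUsU) x)
    (by ext x; exact DFunLike.congr_fun (congrArg (ContinuousLinearMap.toLinearMap) hUUs) x)
  set W : Submodule ℂ H := R.map (e0 : H →ₗ[ℂ] H) with hWdef
  haveI : FiniteDimensional ℂ W := Module.Finite.map _ _
  let e : R ≃ₗ[ℂ] W := e0.submoduleMap R
  have hmem : ∀ x, (star U * T * U) x ∈ W := fun x => by
    refine ⟨T (U x), LinearMap.mem_range_self _ _, rfl⟩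
  rw [trFR_eq_trace (star U * T * U) W hmem]
  have key : ((star U * T * U : H →L[ℂ] H) : H →ₗ[ℂ] H).restrict (fun x _ => hmem x)
      = e.conj ((T : H →ₗ[ℂ] H).restrict fun x _ => LinearMap.mem_range_self _ x) := by
    have hcomp : (((star U * T * U : H →L[ℂ] H) : H →ₗ[ℂ] H).restrict
          (fun x _ => hmem x)) ∘ₗ (e : R →ₗ[ℂ] W)
        = (e : R →ₗ[ℂ] W) ∘ₗ
          ((T : H →ₗ[ℂ] H).restrict fun x _ => LinearMap.mem_range_self _ x) := by
      ext x
      show (star U * T * U) ((star U) (x : H)) = (star U) (T (x : H))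
      have : (U * star U) (x : H) = (x : H) := by rw [hUUs]; rfl
      show (star U) (T (U ((star U) (x : H)))) = (star U) (T (x : H))
      rw [show U ((star U) (x : H)) = (U * star U) (x : H) from rfl, this]
    have := congrArg (fun (f : R →ₗ[ℂ] W) => f ∘ₗ (e.symm : W →ₗ[ℂ] R)) hcomp
    simp only [LinearMap.comp_assoc] at this
    rw [LinearEquiv.comp_coe, LinearEquiv.symm_trans_self, LinearEquiv.refl_toLinearMap,
      LinearMap.comp_id] at this
    rw [this, LinearEquiv.conj_apply, LinearMap.comp_assoc]
  rw [key, LinearMap.trace_conj']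
  rfl

end Aux

/-- For unitaries `U₁`, `U₂` whose commutators with the projection `P`
have finite rank, the index is additive: `ind(U₁U₂) = ind(U₁) + ind(U₂)`. -/
theorem index_additive
    {H : Type*} [NormedAddCommGroup H] [InnerProductSpace ℂ H] [CompleteSpace H]
    (U₁ U₂ P : H →L[ℂ] H)
    (hU₁ : U₁ ∈ unitary (H →L[ℂ] H)) (hU₂ : U₂ ∈ unitary (H →L[ℂ] H))
    (hP_proj : P ∘L P = P) (hP_sa : IsSelfAdjoint P)
    (hfin₁ : FiniteRankOp (P * U₁ - U₁ * P))
    (hfin₂ : FiniteRankOp (P * U₂ - U₂ * P)) :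
    ind P (U₁ * U₂) = ind P U₁ + ind P U₂ := by
  set A₁ : H →L[ℂ] H := star U₁ * P * U₁ - P with hA₁def
  set A₂ : H →L[ℂ] H := star U₂ * P * U₂ - P with hA₂def
  have hU₁s : star U₁ * U₁ = 1 := hU₁.1
  have hU₂s : star U₂ * U₂ = 1 := hU₂.1
  have hA₁eq : A₁ = star U₁ * (P * U₁ - U₁ * P) := by
    rw [hA₁def, mul_sub, ← mul_assoc, ← mul_assoc, hU₁s, one_mul]
  have hA₂eq : A₂ = star U₂ * (P * U₂ - U₂ * P) := by
    rw [hA₂def, mul_sub, ← mul_assoc, ← mul_assoc, hU₂s, one_mul]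
  have hA₁fin : FiniteRankOp A₁ := by rw [hA₁eq]; exact finiteRankOp_mul_left _ _ hfin₁
  have hA₂fin : FiniteRankOp A₂ := by rw [hA₂eq]; exact finiteRankOp_mul_left _ _ hfin₂
  have hconjfin : FiniteRankOp (star U₂ * A₁ * U₂) :=
    finiteRankOp_mul_right _ _ (finiteRankOp_mul_left _ _ hA₁fin)
  have hkey : star (U₁ * U₂) * P * (U₁ * U₂) - P = star U₂ * A₁ * U₂ + A₂ := by
    rw [star_mul, hA₁def, hA₂def]
    noncomm_ring
  rw [ind, ind, ind, hkey, trFR_add _ _ hconjfin hA₂fin,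
    trFR_conj U₂ A₁ hU₂ hA₁fin]
end

section
/- Let U be a unitary with ind(U) = Tr(U*PU - P) = 0 and [P,U] finite rank. Then there exists a unitary V with V - 1 of finite rank such that UV commutes with P, i.e., P(UV) = (UV)P. -/
set_option maxHeartbeats 1000000

local notation "⟪" x ", " y "⟫" => @inner ℂ _ _ x y

open LinearMap in
lemma trace_restrict_of_range_le' {H : Type*} [NormedAddCommGroup H]
    [Module ℂ H] (f : H →ₗ[ℂ] H) (K : Submodule ℂ H) [FiniteDimensional ℂ K]
    (h : LinearMap.range f ≤ K) (hf : ∀ x ∈ K, f x ∈ K) :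
    LinearMap.trace ℂ K (f.restrict hf)
      = LinearMap.trace ℂ (LinearMap.range f) (f.restrict fun x _ => mem_range_self f x) := by
  haveI : FiniteDimensional ℂ (LinearMap.range f) := Submodule.finiteDimensional_of_le h
  let u : K →ₗ[ℂ] LinearMap.range f :=
    LinearMap.codRestrict (LinearMap.range f) (f.domRestrict K) (fun x => ⟨↑x, rfl⟩)
  let i : LinearMap.range f →ₗ[ℂ] K := Submodule.inclusion h
  have h1 : i ∘ₗ u = f.restrict hf := by ext x; rfl
  have h2 : u ∘ₗ i = f.restrict (fun x _ => mem_range_self f x) := by ext x; rfl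
  rw [← h1, ← h2, LinearMap.trace_comp_comm']

lemma trace_idem_eq_finrank_range' {K : Type*} [AddCommGroup K] [Module ℂ K]
    [FiniteDimensional ℂ K] (p : K →ₗ[ℂ] K) (hp : p ∘ₗ p = p) :
    LinearMap.trace ℂ K p = (Module.finrank ℂ (LinearMap.range p) : ℂ) := by
  have hproj : LinearMap.IsProj (LinearMap.range p) p := by
    constructor
    · exact fun x => LinearMap.mem_range_self p x
    · rintro x ⟨y, rfl⟩
      exact congrFun (congrArg DFunLike.coe hp) y
  exact hproj.trace

noncomputable def isomOfFinrankEq' {K : Type*} [NormedAddCommGroup K] [InnerProductSpace ℂ K]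
    (E F : Submodule ℂ K) [FiniteDimensional ℂ E] [FiniteDimensional ℂ F]
    (h : Module.finrank ℂ E = Module.finrank ℂ F) : E ≃ₗᵢ[ℂ] F :=
  (stdOrthonormalBasis ℂ E).repr.trans
    (((stdOrthonormalBasis ℂ F).reindex (finCongr h.symm)).repr.symm)

open LinearMap in
lemma exists_isometry_conj' {K : Type*} [NormedAddCommGroup K] [InnerProductSpace ℂ K]
    [FiniteDimensional ℂ K] (p q : K →ₗ[ℂ] K) (hp : p ∘ₗ p = p) (hq : q ∘ₗ q = q)
    (hps : ∀ a b : K, ⟪p a, b⟫ = ⟪a, p b⟫) (hqs : ∀ a b : K, ⟪q a, b⟫ = ⟪a, q b⟫)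
    (hrk : Module.finrank ℂ (range p) = Module.finrank ℂ (range q)) :
    ∃ v : K ≃ₗᵢ[ℂ] K, ∀ x, q (v x) = v (p x) := by
  have hp' : ∀ x, p (p x) = p x := fun x => congrFun (congrArg DFunLike.coe hp) x
  have hq' : ∀ x, q (q x) = q x := fun x => congrFun (congrArg DFunLike.coe hq) x
  have hpid : ∀ y : range p, p ↑y = ↑y := by rintro ⟨y, ⟨z, rfl⟩⟩; exact hp' z
  have hqid : ∀ y : range q, q ↑y = ↑y := by rintro ⟨y, ⟨z, rfl⟩⟩; exact hq' z
  have hpker : ∀ y : ker p, p ↑y = 0 := fun y => y.2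
  have hqker : ∀ y : ker q, q ↑y = 0 := fun y => y.2
  have hkrk : Module.finrank ℂ (ker p) = Module.finrank ℂ (ker q) := by
    have h1 := LinearMap.finrank_range_add_finrank_ker p
    have h2 := LinearMap.finrank_range_add_finrank_ker q
    omega
  set f := isomOfFinrankEq' (range p) (range q) hrk with hf
  set g := isomOfFinrankEq' (ker p) (ker q) hkrk with hg
  let kp : K →ₗ[ℂ] ker p := LinearMap.codRestrict (ker p) (LinearMap.id - p)
    (fun x => by simp [LinearMap.mem_ker, hp' x])
  let kq : K →ₗ[ℂ] ker q := LinearMap.codRestrict (ker q) (LinearMap.id - q)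
    (fun x => by simp [LinearMap.mem_ker, hq' x])
  let v₀ : K →ₗ[ℂ] K := (range q).subtype ∘ₗ (f : range p →ₗ[ℂ] range q) ∘ₗ p.rangeRestrict
    + (ker q).subtype ∘ₗ (g : ker p →ₗ[ℂ] ker q) ∘ₗ kp
  let w₀ : K →ₗ[ℂ] K := (range p).subtype ∘ₗ (f.symm : range q →ₗ[ℂ] range p) ∘ₗ q.rangeRestrict
    + (ker p).subtype ∘ₗ (g.symm : ker q →ₗ[ℂ] ker p) ∘ₗ kq
  have hv₀ : ∀ x, v₀ x = ↑(f (p.rangeRestrict x)) + ↑(g (kp x)) := fun x => rfl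
  have hw₀ : ∀ x, w₀ x = ↑(f.symm (q.rangeRestrict x)) + ↑(g.symm (kq x)) := fun x => rfl
  have hqv : ∀ x, q (v₀ x) = ↑(f (p.rangeRestrict x)) := by
    intro x
    rw [hv₀, map_add, hqid, hqker, add_zero]
  have hpw : ∀ x, p (w₀ x) = ↑(f.symm (q.rangeRestrict x)) := by
    intro x
    rw [hw₀, map_add, hpid, hpker, add_zero]
  have hwv : ∀ x, w₀ (v₀ x) = x := by
    intro x
    have e1 : q.rangeRestrict (v₀ x) = f (p.rangeRestrict x) := Subtype.ext (hqv x)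
    have e2 : kq (v₀ x) = g (kp x) := by
      apply Subtype.ext
      show v₀ x - q (v₀ x) = _
      rw [hqv, hv₀]; abel
    rw [hw₀, e1, e2, LinearIsometryEquiv.symm_apply_apply, LinearIsometryEquiv.symm_apply_apply]
    show p x + (x - p x) = x
    abel
  have hvw : ∀ x, v₀ (w₀ x) = x := by
    intro x
    have e1 : p.rangeRestrict (w₀ x) = f.symm (q.rangeRestrict x) := Subtype.ext (hpw x)
    have e2 : kp (w₀ x) = g.symm (kq x) := by
      apply Subtype.ext
      show w₀ x - p (w₀ x) = _
      rw [hpw, hw₀]; abel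
    rw [hv₀, e1, e2, LinearIsometryEquiv.apply_symm_apply, LinearIsometryEquiv.apply_symm_apply]
    show q x + (x - q x) = x
    abel
  have hoq : ∀ (a : range q) (b : ker q), ⟪(a : K), (b : K)⟫ = 0 := by
    intro a b
    rw [← hqid a, hqs, hqker, inner_zero_right]
  have hnorm : ∀ x, ‖v₀ x‖ = ‖x‖ := by
    intro x
    have h1 : ‖v₀ x‖ * ‖v₀ x‖ = ‖p x‖ * ‖p x‖ + ‖x - p x‖ * ‖x - p x‖ := by
      rw [hv₀]
      rw [norm_add_sq_eq_norm_sq_add_norm_sq_of_inner_eq_zero (𝕜 := ℂ) _ _ (hoq _ _)]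
      rw [← Submodule.coe_norm, ← Submodule.coe_norm, f.norm_map, g.norm_map,
        Submodule.coe_norm, Submodule.coe_norm]
      rfl
    have h2 : ‖x‖ * ‖x‖ = ‖p x‖ * ‖p x‖ + ‖x - p x‖ * ‖x - p x‖ := by
      have : ⟪p x, x - p x⟫ = 0 := by
        rw [hps]
        simp [map_sub, hp' x]
      have h3 := norm_add_sq_eq_norm_sq_add_norm_sq_of_inner_eq_zero (𝕜 := ℂ) _ _ this
      simpa using h3
    exact (mul_self_inj_of_nonneg (norm_nonneg _) (norm_nonneg _)).mp (h1.trans h2.symm)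
  refine ⟨⟨LinearEquiv.ofLinear v₀ w₀ (by ext x; exact hvw x) (by ext x; exact hwv x),
    hnorm⟩, ?_⟩
  intro x
  show q (v₀ x) = v₀ (p x)
  rw [hqv]
  have e1 : p.rangeRestrict (p x) = p.rangeRestrict x := Subtype.ext (hp' x)
  have e2 : kp (p x) = 0 := by
    apply Subtype.ext
    show p x - p (p x) = 0
    rw [hp' x, sub_self]
  rw [hv₀, e1, e2, map_zero]
  simp

open LinearMap in
lemma proj_equiv' {H : Type*} [NormedAddCommGroup H] [InnerProductSpace ℂ H] [CompleteSpace H]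
    (P Q : H →L[ℂ] H) (hP : P * P = P) (hQ : Q * Q = Q)
    (hPs : ∀ a b : H, ⟪P a, b⟫ = ⟪a, P b⟫) (hQs : ∀ a b : H, ⟪Q a, b⟫ = ⟪a, Q b⟫)
    (hfin : FiniteDimensional ℂ (range ((Q - P : H →L[ℂ] H) : H →ₗ[ℂ] H)))
    (htr : trFR (Q - P) = 0) :
    ∃ V ∈ unitary (H →L[ℂ] H), FiniteRankOp (V - 1) ∧ Q * V = V * P := by
  have hP' : ∀ x, P (P x) = P x := fun x => congrFun (congrArg DFunLike.coe hP) x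
  have hQ' : ∀ x, Q (Q x) = Q x := fun x => congrFun (congrArg DFunLike.coe hQ) x
  set Dl : H →ₗ[ℂ] H := ((Q - P : H →L[ℂ] H) : H →ₗ[ℂ] H) with hDl
  have hDapp : ∀ x, Dl x = Q x - P x := fun x => rfl
  set Pl : H →ₗ[ℂ] H := (P : H →ₗ[ℂ] H) with hPl
  set Ql : H →ₗ[ℂ] H := (Q : H →ₗ[ℂ] H) with hQl
  set R : Submodule ℂ H := range Dl with hR
  haveI : FiniteDimensional ℂ R := hfin
  set K : Submodule ℂ H := R ⊔ R.map Pl ⊔ R.map Ql with hK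
  haveI : FiniteDimensional ℂ (R.map Pl) := Module.Finite.map R Pl
  haveI : FiniteDimensional ℂ (R.map Ql) := Module.Finite.map R Ql
  haveI : FiniteDimensional ℂ K := by
    rw [hK]; infer_instance
  have hRK : R ≤ K := le_sup_of_le_left le_sup_left
  have hPRK : R.map Pl ≤ K := le_sup_of_le_left le_sup_right
  have hQRK : R.map Ql ≤ K := le_sup_right
  have hPlapp : ∀ x, Pl x = P x := fun _ => rfl
  have hQlapp : ∀ x, Ql x = Q x := fun _ => rfl
  have hPK : ∀ x ∈ K, P x ∈ K := by
    intro x hx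
    have : K ≤ Submodule.comap Pl K := by
      refine sup_le (sup_le ?_ ?_) ?_
      · intro y hy
        exact hPRK ⟨y, hy, rfl⟩
      · rintro _ ⟨y, hy, rfl⟩
        simp only [Submodule.mem_comap, hPlapp]
        rw [hP' y]
        exact hPRK ⟨y, hy, hPlapp y⟩
      · rintro _ ⟨y, hy, rfl⟩
        simp only [Submodule.mem_comap, hPlapp, hQlapp]
        have hQy : Q y = Dl y + P y := by rw [hDapp]; abel
        rw [hQy, map_add, hP' y]
        exact K.add_mem (hPRK ⟨Dl y, mem_range_self Dl y, hPlapp _⟩) (hPRK ⟨y, hy, hPlapp y⟩)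
    have := this hx
    simpa only [Submodule.mem_comap, hPlapp] using this
  have hQK : ∀ x ∈ K, Q x ∈ K := by
    intro x hx
    have : K ≤ Submodule.comap Ql K := by
      refine sup_le (sup_le ?_ ?_) ?_
      · intro y hy
        simp only [Submodule.mem_comap, hQlapp]
        have hQy : Q y = Dl y + P y := by rw [hDapp]; abel
        rw [hQy]
        exact K.add_mem (hRK (mem_range_self Dl y)) (hPRK ⟨y, hy, hPlapp y⟩)
      · rintro _ ⟨y, hy, rfl⟩
        simp only [Submodule.mem_comap, hPlapp, hQlapp]
        have hQy : Q (P y) = Dl (P y) + P (P y) := by rw [hDapp]; abel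
        rw [hQy, hP' y]
        exact K.add_mem (hRK (mem_range_self Dl (P y))) (hPRK ⟨y, hy, hPlapp y⟩)
      · rintro _ ⟨y, hy, rfl⟩
        simp only [Submodule.mem_comap, hQlapp]
        rw [hQ' y]
        exact hQRK ⟨y, hy, hQlapp y⟩
    have := this hx
    simpa only [Submodule.mem_comap, hQlapp] using this
  -- orthogonal complement behaviour
  have hPK' : ∀ x ∈ Kᗮ, P x ∈ Kᗮ := by
    intro x hx
    intro u hu
    rw [← hPs u x]
    exact hx (P u) (hPK u hu)
  have hQK' : ∀ x ∈ Kᗮ, Q x ∈ Kᗮ := by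
    intro x hx
    intro u hu
    rw [← hQs u x]
    exact hx (Q u) (hQK u hu)
  have hD0 : ∀ x ∈ Kᗮ, Dl x = 0 := by
    intro x hx
    have h1 : Dl x ∈ K := hRK (mem_range_self Dl x)
    have h2 : Dl x ∈ Kᗮ := by
      rw [hDapp]
      exact Submodule.sub_mem _ (hQK' x hx) (hPK' x hx)
    exact (Submodule.disjoint_def.mp K.orthogonal_disjoint) _ h1 h2
  -- restrictions to K
  set pK : K →ₗ[ℂ] K := Pl.restrict hPK with hpK
  set qK : K →ₗ[ℂ] K := Ql.restrict hQK with hqK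
  set dK : K →ₗ[ℂ] K := Dl.restrict (fun x _ => hRK (mem_range_self Dl x)) with hdK
  have hpKapp : ∀ (y : K), (pK y : H) = P ↑y := fun y => rfl
  have hqKapp : ∀ (y : K), (qK y : H) = Q ↑y := fun y => rfl
  have hqdp : qK = dK + pK := by
    ext y
    show Q ↑y = ((dK + pK) y : H)
    have : ((dK + pK) y : H) = Dl ↑y + P ↑y := rfl
    rw [this, hDapp]; abel
  have hpp : pK ∘ₗ pK = pK := by
    ext y; exact hP' ↑y
  have hqq : qK ∘ₗ qK = qK := by
    ext y; exact hQ' ↑y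
  have htrd : LinearMap.trace ℂ K dK = 0 := by
    rw [hdK, trace_restrict_of_range_le' Dl K hRK]
    exact htr
  have hpsym : ∀ a b : K, ⟪pK a, b⟫ = ⟪a, pK b⟫ := by
    intro a b
    rw [Submodule.coe_inner, Submodule.coe_inner, hpKapp, hpKapp]
    exact hPs ↑a ↑b
  have hqsym : ∀ a b : K, ⟪qK a, b⟫ = ⟪a, qK b⟫ := by
    intro a b
    rw [Submodule.coe_inner, Submodule.coe_inner, hqKapp, hqKapp]
    exact hQs ↑a ↑b
  have hrk : Module.finrank ℂ (range pK) = Module.finrank ℂ (range qK) := by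
    have h1 := trace_idem_eq_finrank_range' pK hpp
    have h2 := trace_idem_eq_finrank_range' qK hqq
    have h3 : LinearMap.trace ℂ K qK = LinearMap.trace ℂ K pK := by
      rw [hqdp, map_add, htrd, zero_add]
    rw [h1, h2] at h3
    exact_mod_cast h3.symm
  obtain ⟨v, hv⟩ := exists_isometry_conj' pK qK hpp hqq hpsym hqsym hrk
  -- lift the isometry of K to H
  haveI : CompleteSpace K := FiniteDimensional.complete ℂ K
  set π : H →L[ℂ] K := K.orthogonalProjectionOnto with hπdef
  have hπK : ∀ k : K, π ↑k = k := fun k => Submodule.orthogonalProjectionOnto_mem_subspace_eq_self k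
  have hπo : ∀ x ∈ Kᗮ, π x = 0 := fun x hx =>
    Submodule.orthogonalProjectionOnto_apply_of_mem_orthogonal hx
  have hsub : ∀ x : H, x - ↑(π x) ∈ Kᗮ := fun x => K.sub_starProjection_mem_orthogonal x
  let Vl : H →ₗ[ℂ] H := K.subtype ∘ₗ (v : K →ₗ[ℂ] K) ∘ₗ (π : H →ₗ[ℂ] K)
    + (LinearMap.id - K.subtype ∘ₗ (π : H →ₗ[ℂ] K))
  let Wl : H →ₗ[ℂ] H := K.subtype ∘ₗ (v.symm : K →ₗ[ℂ] K) ∘ₗ (π : H →ₗ[ℂ] K)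
    + (LinearMap.id - K.subtype ∘ₗ (π : H →ₗ[ℂ] K))
  have hVl : ∀ x, Vl x = ↑(v (π x)) + (x - ↑(π x)) := fun x => rfl
  have hWl : ∀ x, Wl x = ↑(v.symm (π x)) + (x - ↑(π x)) := fun x => rfl
  have hπV : ∀ x, π (Vl x) = v (π x) := by
    intro x
    rw [hVl, map_add, hπK, hπo _ (hsub x), add_zero]
  have hπW : ∀ x, π (Wl x) = v.symm (π x) := by
    intro x
    rw [hWl, map_add, hπK, hπo _ (hsub x), add_zero]
  have hWV : ∀ x, Wl (Vl x) = x := by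
    intro x
    rw [hWl, hπV, LinearIsometryEquiv.symm_apply_apply, hVl]
    abel
  have hVW : ∀ x, Vl (Wl x) = x := by
    intro x
    rw [hVl, hπW, LinearIsometryEquiv.apply_symm_apply, hWl]
    abel
  have hnorm : ∀ x, ‖Vl x‖ = ‖x‖ := by
    intro x
    have ho1 : ⟪(↑(v (π x)) : H), x - ↑(π x)⟫ = 0 :=
      Submodule.inner_right_of_mem_orthogonal (Submodule.coe_mem _) (hsub x)
    have ho2 : ⟪(↑(π x) : H), x - ↑(π x)⟫ = 0 :=
      Submodule.inner_right_of_mem_orthogonal (Submodule.coe_mem _) (hsub x)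
    have h1 := norm_add_sq_eq_norm_sq_add_norm_sq_of_inner_eq_zero (𝕜 := ℂ) _ _ ho1
    have h2 := norm_add_sq_eq_norm_sq_add_norm_sq_of_inner_eq_zero (𝕜 := ℂ) _ _ ho2
    have hx : (↑(π x) : H) + (x - ↑(π x)) = x := by abel
    rw [hx] at h2
    have hv' : ‖(↑(v (π x)) : H)‖ = ‖(↑(π x) : H)‖ := by
      rw [← Submodule.coe_norm, ← Submodule.coe_norm, v.norm_map]
    rw [hVl]
    have h3 : ‖(↑(v (π x)) : H) + (x - ↑(π x))‖ * ‖(↑(v (π x)) : H) + (x - ↑(π x))‖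
        = ‖x‖ * ‖x‖ := by rw [h1, hv', h2]
    exact (mul_self_inj_of_nonneg (norm_nonneg _) (norm_nonneg _)).mp h3
  set Viso : H ≃ₗᵢ[ℂ] H :=
    ⟨LinearEquiv.ofLinear Vl Wl (by ext x; exact hVW x) (by ext x; exact hWV x), hnorm⟩
    with hViso
  set Vu := (Unitary.linearIsometryEquiv (𝕜 := ℂ) (H := H)).symm Viso with hVu
  have hVapp : ∀ x, (Vu : H →L[ℂ] H) x = Vl x := fun x => rfl
  refine ⟨(Vu : H →L[ℂ] H), Vu.2, ?_, ?_⟩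
  · -- finite rank of V - 1
    have hle : range ((((Vu : H →L[ℂ] H) - 1) : H →L[ℂ] H) : H →ₗ[ℂ] H) ≤ K := by
      rintro _ ⟨x, rfl⟩
      have happ : ((((Vu : H →L[ℂ] H) - 1) : H →L[ℂ] H) : H →ₗ[ℂ] H) x
          = ↑(v (π x)) - ↑(π x) := by
        show (Vu : H →L[ℂ] H) x - x = _
        rw [hVapp, hVl]
        abel
      rw [happ]
      exact K.sub_mem (Submodule.coe_mem _) (Submodule.coe_mem _)
    exact Submodule.finiteDimensional_of_le hle
  · -- intertwining
    have hQV : ∀ x, Q (Vl x) = ↑(v (pK (π x))) + P (x - ↑(π x)) := by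
      intro x
      rw [hVl, map_add]
      have e1 : Q ↑(v (π x)) = ↑(qK (v (π x))) := rfl
      have e2 : Q (x - ↑(π x)) = P (x - ↑(π x)) := by
        have h0 := hD0 _ (hsub x)
        rw [hDapp] at h0
        exact sub_eq_zero.mp h0
      rw [e1, hv (π x), e2]
    have hVP : ∀ x, Vl (P x) = ↑(v (pK (π x))) + P (x - ↑(π x)) := by
      intro x
      have hdecomp : P x = ↑(pK (π x)) + P (x - ↑(π x)) := by
        have e3 : P ↑(π x) = ↑(pK (π x)) := rfl
        rw [← e3, ← map_add]
        congr 1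
        abel
      have hπP : π (P x) = pK (π x) := by
        rw [hdecomp, map_add, hπK, hπo _ (hPK' _ (hsub x)), add_zero]
      rw [hVl, hπP, hdecomp]
      abel
    ext x
    show Q ((Vu : H →L[ℂ] H) x) = (Vu : H →L[ℂ] H) (P x)
    rw [hVapp, hVapp, hQV x, ← hVP x]

/-- If `U` is a unitary with `[P,U]` of finite rank and vanishing index
`Tr(U* P U - P) = 0`, then there is a unitary `V` with `V - 1` of finite rank such that
`U V` commutes with `P`. -/
theorem index_zero_decoupling
    {H : Type*} [NormedAddCommGroup H] [InnerProductSpace ℂ H] [CompleteSpace H]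
    (U P : H →L[ℂ] H) (hU : U ∈ unitary (H →L[ℂ] H))
    (hP_proj : P ∘L P = P) (hP_sa : IsSelfAdjoint P)
    (hfin : FiniteRankOp (P * U - U * P))
    (hind : trFR (star U * P * U - P) = 0) :
    ∃ V ∈ unitary (H →L[ℂ] H),
      FiniteRankOp (V - 1) ∧ P * (U * V) = (U * V) * P := by
  have hUs : star U * U = 1 := Unitary.star_mul_self_of_mem hU
  have hUs' : U * star U = 1 := Unitary.mul_star_self_of_mem hU
  set Q : H →L[ℂ] H := star U * P * U with hQdef
  have hPP : P * P = P := hP_proj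
  have hQQ : Q * Q = Q := by
    rw [hQdef]
    calc (star U * P * U) * (star U * P * U)
        = star U * (P * ((U * star U) * (P * U))) := by simp only [mul_assoc]
      _ = star U * (P * (P * U)) := by rw [hUs', one_mul]
      _ = star U * ((P * P) * U) := by rw [← mul_assoc P P U]
      _ = star U * P * U := by rw [hPP, mul_assoc]
  have hQsa : IsSelfAdjoint Q := by
    show star Q = Q
    rw [hQdef]
    simp only [star_mul, star_star, hP_sa.star_eq, mul_assoc]
  have hPs : ∀ a b : H, ⟪P a, b⟫ = ⟪a, P b⟫ := fun a b =>
    (ContinuousLinearMap.isSelfAdjoint_iff_isSymmetric.mp hP_sa) a b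
  have hQs : ∀ a b : H, ⟪Q a, b⟫ = ⟪a, Q b⟫ := fun a b =>
    (ContinuousLinearMap.isSelfAdjoint_iff_isSymmetric.mp hQsa) a b
  have hD : Q - P = star U * (P * U - U * P) := by
    rw [hQdef, mul_sub, ← mul_assoc, ← mul_assoc, hUs, one_mul]
  have hfin' : FiniteDimensional ℂ
      (LinearMap.range ((Q - P : H →L[ℂ] H) : H →ₗ[ℂ] H)) := by
    have hcoe : ((Q - P : H →L[ℂ] H) : H →ₗ[ℂ] H)
        = ((star U : H →L[ℂ] H) : H →ₗ[ℂ] H)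
          ∘ₗ (((P * U - U * P) : H →L[ℂ] H) : H →ₗ[ℂ] H) := by
      rw [hD]; rfl
    haveI : FiniteDimensional ℂ
        (LinearMap.range (((P * U - U * P) : H →L[ℂ] H) : H →ₗ[ℂ] H)) := hfin
    rw [hcoe, LinearMap.range_comp]
    exact Module.Finite.map _ _
  obtain ⟨V, hVmem, hVfr, hQV⟩ := proj_equiv' P Q hPP hQQ hPs hQs hfin' hind
  refine ⟨V, hVmem, hVfr, ?_⟩
  have key : U * (Q * V) = P * (U * V) := by
    rw [hQdef]
    calc U * ((star U * P * U) * V)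
        = (U * star U) * (P * (U * V)) := by simp only [mul_assoc]
      _ = P * (U * V) := by rw [hUs', one_mul]
  rw [hQV] at key
  rw [← key, ← mul_assoc]
end

section
/- Let Û : ℝ → Mₙ(ℂ) be given by Û(p) = Σ_{x=-L}^{L} Uₓ e^{ipx} with fixed matrices Uₓ, and suppose Û(p) is unitary for every p ∈ ℝ. Then det Û(p) = C e^{inp} for some constant C with |C| = 1 and some integer n. -/
open Complex Polynomial

/-- A polynomial vanishing at every point of the unit circle is zero. -/
lemma aux_zero_of_circle {P : ℂ[X]}
    (h : ∀ p : ℝ, P.eval (Complex.exp (Complex.I * p)) = 0) : P = 0 := by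
  apply P.eq_zero_of_infinite_isRoot
  have hsub : (fun p : ℝ => Complex.exp (Complex.I * p)) '' Set.Ioo 0 1 ⊆
      { x | P.IsRoot x } := by
    rintro z ⟨p, _, rfl⟩
    exact h p
  have hinj : Set.InjOn (fun p : ℝ => Complex.exp (Complex.I * p)) (Set.Ioo 0 1) := by
    intro p₁ hp₁ p₂ hp₂ hpe
    obtain ⟨n, hn⟩ := Complex.exp_eq_exp_iff_exists_int.mp hpe
    have him := congrArg Complex.im hn
    simp [Complex.mul_im] at him
    have hn0 : n = 0 := by
      rcases lt_trichotomy n 0 with hlt | heq | hgt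
      · have hle : n ≤ -1 := by omega
        have : (n:ℝ) ≤ -1 := by exact_mod_cast hle
        nlinarith [hp₁.1, hp₁.2, hp₂.1, hp₂.2, Real.pi_gt_three]
      · exact heq
      · have : (1:ℝ) ≤ (n:ℝ) := by exact_mod_cast hgt
        nlinarith [hp₁.1, hp₁.2, hp₂.1, hp₂.2, Real.pi_gt_three]
    rw [hn0] at him
    simpa using him
  exact ((Set.infinite_image_iff hinj).mpr (Set.Ioo_infinite (by norm_num))).mono hsub

/-- A polynomial of modulus one on the unit circle is a monomial. -/
lemma aux_monomial {Q : ℂ[X]}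
    (h : ∀ p : ℝ, ‖Q.eval (Complex.exp (Complex.I * p))‖ = 1) :
    ∃ (c : ℂ) (k : ℕ), ‖c‖ = 1 ∧ Q = Polynomial.C c * Polynomial.X ^ k := by
  set d := Q.natDegree with hd
  set Qs : ℂ[X] := ∑ k ∈ Finset.range (d + 1),
      Polynomial.C ((starRingEnd ℂ) (Q.coeff (d - k))) * Polynomial.X ^ k with hQs
  have hmul : Q * Qs = Polynomial.X ^ d := by
    have hz : ∀ p : ℝ, (Q * Qs - Polynomial.X ^ d).eval (Complex.exp (Complex.I * p)) = 0 := by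
      intro p
      set w : ℂ := Complex.exp (Complex.I * p) with hw
      have hwne : w ≠ 0 := Complex.exp_ne_zero _
      have hwabs : ‖w‖ = 1 := by
        rw [hw, Complex.norm_exp]
        simp [Complex.mul_re]
      have hconjw : (starRingEnd ℂ) w = w⁻¹ := by
        rw [← Complex.inv_eq_conj hwabs]
      have hQsval : Qs.eval w = w ^ d * (starRingEnd ℂ) (Q.eval w) := by
        have hQev : Q.eval w = ∑ j ∈ Finset.range (d + 1), Q.coeff j * w ^ j :=
          Q.eval_eq_sum_range w
        rw [hQev, map_sum, Finset.mul_sum]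
        have hterm : ∀ j ∈ Finset.range (d + 1),
            w ^ d * (starRingEnd ℂ) (Q.coeff j * w ^ j)
              = (starRingEnd ℂ) (Q.coeff j) * w ^ (d - j) := by
          intro j hj
          rw [Finset.mem_range] at hj
          have hj' : j ≤ d := Nat.lt_succ_iff.mp hj
          rw [map_mul, map_pow, hconjw, pow_sub₀ w hwne hj', inv_pow]
          ring
        rw [Finset.sum_congr rfl hterm,
          ← Finset.sum_range_reflect (fun j => (starRingEnd ℂ) (Q.coeff j) * w ^ (d - j)) (d + 1)]
        rw [hQs]
        simp only [eval_finset_sum, eval_mul, eval_C, eval_pow, eval_X]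
        apply Finset.sum_congr rfl
        intro i hi
        rw [Finset.mem_range] at hi
        rw [show d + 1 - 1 - i = d - i by omega, Nat.sub_sub_self (by omega : i ≤ d)]
      have habs : Q.eval w * (starRingEnd ℂ) (Q.eval w) = 1 := by
        rw [Complex.mul_conj, Complex.normSq_eq_norm_sq, h p]
        norm_num
      simp only [eval_sub, eval_mul, eval_pow, eval_X, hQsval]
      linear_combination (w ^ d) * habs
    have := aux_zero_of_circle hz
    linear_combination this
  have hdvd : Q ∣ Polynomial.X ^ d := ⟨Qs, hmul.symm⟩
  obtain ⟨k, hk, hassoc⟩ := (dvd_prime_pow Polynomial.prime_X d).mp hdvd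
  obtain ⟨u, hu⟩ := hassoc.symm
  obtain ⟨c, hcu, hC⟩ := Polynomial.isUnit_iff.mp u.isUnit
  refine ⟨c, k, ?_, ?_⟩
  · have h0 := h 0
    have hQ1 : Q.eval 1 = c := by
      rw [← hu, ← hC]
      simp
    rw [show Complex.I * ((0:ℝ):ℂ) = 0 by simp, Complex.exp_zero, hQ1] at h0
    exact h0
  · rw [← hu, ← hC]
    ring

/-- Let `Û(p) = ∑_{x=-L}^{L} Uₓ e^{ipx}` be a matrix Laurent polynomial which
is unitary for every real `p`.  Then `det Û(p) = C e^{inp}` for some constant `C` with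
`|C| = 1` and some integer `n`. -/
theorem det_of_unitary_symbol_is_monomial
    {N : ℕ} (L : ℕ) (U : ℤ → Matrix (Fin N) (Fin N) ℂ)
    (Uhat : ℝ → Matrix (Fin N) (Fin N) ℂ)
    (hUhat : ∀ p : ℝ, Uhat p = ∑ x ∈ Finset.Icc (-(L : ℤ)) (L : ℤ),
      Complex.exp (Complex.I * p * x) • U x)
    (hunitary : ∀ p : ℝ, Uhat p ∈ Matrix.unitaryGroup (Fin N) ℂ) :
    ∃ (C : ℂ) (n : ℤ), ‖C‖ = 1 ∧
      ∀ p : ℝ, (Uhat p).det = C * Complex.exp (Complex.I * n * p) := by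
  classical
  set V : Matrix (Fin N) (Fin N) ℂ[X] :=
    ∑ x ∈ Finset.Icc (-(L : ℤ)) (L : ℤ),
      (Polynomial.X : ℂ[X]) ^ (x + L).toNat • (U x).map Polynomial.C with hV
  set Q : ℂ[X] := V.det with hQ
  have hVeval : ∀ p : ℝ,
      (Polynomial.evalRingHom (Complex.exp (Complex.I * p))).mapMatrix V =
        Complex.exp (Complex.I * p * L) • Uhat p := by
    intro p
    ext i j
    rw [hUhat]
    simp only [RingHom.mapMatrix_apply, Matrix.map_apply, hV, Matrix.smul_apply,
      Matrix.sum_apply, coe_evalRingHom, Polynomial.eval_finset_sum, smul_eq_mul,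
      Finset.mul_sum]
    apply Finset.sum_congr rfl
    intro x hx
    rw [Finset.mem_Icc] at hx
    have hxL : ((x + L).toNat : ℤ) = x + L := Int.toNat_of_nonneg (by omega)
    simp only [smul_eq_mul, Polynomial.eval_mul, Polynomial.eval_pow, Polynomial.eval_X,
      Polynomial.eval_C, Matrix.map_apply]
    have hexp : Complex.exp (Complex.I * p) ^ (x + L).toNat
        = Complex.exp (Complex.I * p * L) * Complex.exp (Complex.I * p * x) := by
      rw [← Complex.exp_nat_mul, ← Complex.exp_add]
      congr 1
      have hcast : ((x + L).toNat : ℂ) = (x : ℂ) + (L : ℂ) := by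
        exact_mod_cast congrArg (fun z : ℤ => (z : ℂ)) hxL
      rw [hcast]
      ring
    rw [hexp]
    ring
  have hQeval : ∀ p : ℝ,
      Q.eval (Complex.exp (Complex.I * p)) =
        Complex.exp (Complex.I * p * L) ^ N * (Uhat p).det := by
    intro p
    rw [hQ, ← Polynomial.coe_evalRingHom, RingHom.map_det, hVeval p, Matrix.det_smul,
      Fintype.card_fin]
  have hdetabs : ∀ p : ℝ, ‖(Uhat p).det‖ = 1 := by
    intro p
    have hmem := Matrix.det_of_mem_unitary (hunitary p)
    have h2 : (starRingEnd ℂ) (Uhat p).det * (Uhat p).det = 1 := hmem.1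
    have h3 := congrArg (‖·‖) h2
    rw [norm_mul, Complex.norm_conj, norm_one] at h3
    nlinarith [norm_nonneg (Uhat p).det]
  have habs : ∀ p : ℝ, ‖Q.eval (Complex.exp (Complex.I * p))‖ = 1 := by
    intro p
    rw [hQeval p, norm_mul, norm_pow, Complex.norm_exp, hdetabs p]
    simp [Complex.mul_re]
  obtain ⟨c, k, hc, hQform⟩ := aux_monomial habs
  refine ⟨c, (k : ℤ) - L * N, hc, ?_⟩
  intro p
  have h1 := hQeval p
  rw [hQform] at h1
  simp only [Polynomial.eval_mul, Polynomial.eval_C, Polynomial.eval_pow,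
    Polynomial.eval_X] at h1
  have hne : Complex.exp (Complex.I * p * L) ^ N ≠ 0 := pow_ne_zero _ (Complex.exp_ne_zero _)
  have key : Complex.exp (Complex.I * p) ^ k =
      Complex.exp (Complex.I * p * L) ^ N
        * Complex.exp (Complex.I * (((k : ℤ) - L * N : ℤ) : ℂ) * p) := by
    rw [← Complex.exp_nat_mul, ← Complex.exp_nat_mul, ← Complex.exp_add]
    congr 1
    push_cast
    ring
  rw [key] at h1
  exact mul_left_cancel₀ hne (by linear_combination -h1)
end

section
/- For a translation-invariant unitary Û(p) = Σ_{x=-L}^{L} Uₓ e^{ipx} with matrix coefficients Uₓ ∈ Mₙ(ℂ), the winding number n defined by det Û(p) = C e^{inp} satisfies n = Σ_{m ∈ ℤ} m · Tr(Uₘ* Uₘ). -/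
open Complex Matrix Finset

lemma trace_adjugate_mul' {N : ℕ} (A B : Matrix (Fin N) (Fin N) ℂ) :
    (Matrix.adjugate A * B).trace
      = ∑ i, (A.updateCol i (fun k => B k i)).det := by
  have h : ∀ i, (Matrix.adjugate A * B) i i = Matrix.cramer A (fun k => B k i) i := by
    intro i
    rw [Matrix.cramer_eq_adjugate_mulVec]
    simp [Matrix.mul_apply, Matrix.mulVec, dotProduct]
  simp only [Matrix.trace, Matrix.diag_apply, h, Matrix.cramer_apply]

/-- Jacobi's formula. -/
lemma hasDerivAt_det' {N : ℕ} {A : ℝ → Matrix (Fin N) (Fin N) ℂ}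
    {A' : Matrix (Fin N) (Fin N) ℂ} {p : ℝ}
    (h : ∀ i j, HasDerivAt (fun q => A q i j) (A' i j) p) :
    HasDerivAt (fun q => (A q).det) ((Matrix.adjugate (A p) * A').trace) p := by
  have key : HasDerivAt (fun q => (A q).det)
      (∑ σ : Equiv.Perm (Fin N), ((Equiv.Perm.sign σ : ℤ) : ℂ) *
        ∑ i, (∏ j ∈ Finset.univ.erase i, A p (σ j) j) • A' (σ i) i) p := by
    simp only [Matrix.det_apply']
    exact HasDerivAt.fun_sum fun σ _ =>
      (HasDerivAt.fun_finsetProd (fun i _ => h (σ i) i)).const_mul _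
  convert key using 1
  rw [trace_adjugate_mul']
  have hprod : ∀ (i : Fin N) (σ : Equiv.Perm (Fin N)),
      (∏ j, (A p).updateCol i (fun k => A' k i) (σ j) j)
        = A' (σ i) i * ∏ j ∈ Finset.univ.erase i, A p (σ j) j := by
    intro i σ
    rw [← Finset.mul_prod_erase Finset.univ _ (Finset.mem_univ i)]
    congr 1
    · simp [Matrix.updateCol_apply]
    · exact Finset.prod_congr rfl fun j hj => by
        simp [Matrix.updateCol_apply, (Finset.mem_erase.mp hj).1]
  calc ∑ i, ((A p).updateCol i (fun k => A' k i)).det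
      = ∑ i, ∑ σ : Equiv.Perm (Fin N), ((Equiv.Perm.sign σ : ℤ) : ℂ) *
          (A' (σ i) i * ∏ j ∈ Finset.univ.erase i, A p (σ j) j) := by
        refine Finset.sum_congr rfl fun i _ => ?_
        rw [Matrix.det_apply']
        exact Finset.sum_congr rfl fun σ _ => by rw [hprod]
    _ = ∑ σ : Equiv.Perm (Fin N), ((Equiv.Perm.sign σ : ℤ) : ℂ) *
        ∑ i, (∏ j ∈ Finset.univ.erase i, A p (σ j) j) • A' (σ i) i := by
        rw [Finset.sum_comm]
        refine Finset.sum_congr rfl fun σ _ => ?_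
        rw [Finset.mul_sum]
        refine Finset.sum_congr rfl fun i _ => ?_
        rw [smul_eq_mul]; ring

lemma hasDerivAt_exp_I_mul (x : ℤ) (p : ℝ) :
    HasDerivAt (fun q : ℝ => Complex.exp (Complex.I * q * x))
      (Complex.I * x * Complex.exp (Complex.I * p * x)) p := by
  have h1 : HasDerivAt (fun z : ℂ => Complex.I * z * x) (Complex.I * x) (p : ℂ) := by
    simpa using ((hasDerivAt_id (p : ℂ)).const_mul Complex.I).mul_const (x : ℂ)
  have h2 := (Complex.hasDerivAt_exp (Complex.I * p * x)).comp (p : ℂ) h1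
  have h3 := h2.comp_ofReal
  exact h3.congr_deriv (by ring)

/-- Discrete Fourier orthogonality. -/
lemma sum_exp_eq (M : ℕ) (hM : 0 < M) (k : ℤ) (hk : k ≠ 0) (hkM : k.natAbs < M) :
    ∑ j ∈ Finset.range M, Complex.exp (Complex.I * ((2 * Real.pi * j / M : ℝ) : ℂ) * k) = 0 := by
  have hMne : (M : ℂ) ≠ 0 := by exact_mod_cast hM.ne'
  have h2πI : (2 : ℂ) * Real.pi * Complex.I ≠ 0 := by
    simp [Real.pi_ne_zero, Complex.I_ne_zero, Complex.ofReal_ne_zero]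
  set ζ : ℂ := Complex.exp (2 * Real.pi * Complex.I * k / M) with hζ
  have hterm : ∀ j ∈ Finset.range M,
      Complex.exp (Complex.I * ((2 * Real.pi * j / M : ℝ) : ℂ) * k) = ζ ^ j := by
    intro j _
    rw [hζ, ← Complex.exp_nat_mul]
    congr 1
    push_cast
    field_simp
  rw [Finset.sum_congr rfl hterm]
  have hζ1 : ζ ≠ 1 := by
    intro hone
    rw [hζ, Complex.exp_eq_one_iff] at hone
    obtain ⟨m, hm⟩ := hone
    rw [div_eq_iff hMne] at hm
    have hk' : (k : ℂ) = (m : ℂ) * M :=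
      mul_left_cancel₀ h2πI (by linear_combination hm)
    have hkZ : k = m * M := by exact_mod_cast hk'
    have hdvd : (M : ℤ) ∣ k := ⟨m, by linarith [hkZ, mul_comm m (M:ℤ)]⟩
    have h1 : M ∣ k.natAbs := by
      have := Int.natAbs_dvd_natAbs.mpr hdvd
      simpa using this
    have := Nat.le_of_dvd (Int.natAbs_pos.mpr hk) h1
    omega
  rw [geom_sum_eq hζ1]
  have hpow : ζ ^ M = 1 := by
    rw [hζ, ← Complex.exp_nat_mul]
    have : (M : ℂ) * (2 * Real.pi * Complex.I * k / M) = k * (2 * Real.pi * Complex.I) := by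
      field_simp
    rw [this, Complex.exp_int_mul_two_pi_mul_I]
  rw [hpow, sub_self, zero_div]

lemma exp_term' (p : ℝ) (x y : ℤ) :
    Complex.I * x * Complex.exp (Complex.I * p * x) * star (Complex.exp (Complex.I * p * y))
      = Complex.I * x * Complex.exp (Complex.I * p * ((x - y : ℤ) : ℂ)) := by
  have hstar : star (Complex.exp (Complex.I * (p : ℂ) * (y : ℂ)))
      = Complex.exp (-(Complex.I * p * y)) := by
    rw [Complex.star_def, ← Complex.exp_conj]
    congr 1
    simp [Complex.conj_I]
  rw [hstar]
  have : Complex.exp (Complex.I * (p:ℂ) * x) * Complex.exp (-(Complex.I * (p:ℂ) * y))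
      = Complex.exp (Complex.I * p * ((x - y : ℤ) : ℂ)) := by
    rw [← Complex.exp_add]
    congr 1
    push_cast
    ring
  calc Complex.I * (x:ℂ) * Complex.exp (Complex.I * (p:ℂ) * x) * Complex.exp (-(Complex.I * (p:ℂ) * y))
      = Complex.I * x * (Complex.exp (Complex.I * (p:ℂ) * x) * Complex.exp (-(Complex.I * (p:ℂ) * y))) := by ring
    _ = _ := by rw [this]

/-- For a translation-invariant unitary `Û(p) = ∑_{x=-L}^{L} Uₓ e^{ipx}`,
the winding number `n` defined by `det Û(p) = C e^{inp}` satisfies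
`n = ∑ₘ m · Tr(Uₘ* Uₘ)`. -/
theorem winding_number_eq_index_sum
    {N : ℕ} (L : ℕ) (U : ℤ → Matrix (Fin N) (Fin N) ℂ)
    (Uhat : ℝ → Matrix (Fin N) (Fin N) ℂ)
    (hUhat : ∀ p : ℝ, Uhat p = ∑ x ∈ Finset.Icc (-(L : ℤ)) (L : ℤ),
      Complex.exp (Complex.I * p * x) • U x)
    (hunitary : ∀ p : ℝ, Uhat p ∈ Matrix.unitaryGroup (Fin N) ℂ)
    (C : ℂ) (n : ℤ)
    (hdet : ∀ p : ℝ, (Uhat p).det = C * Complex.exp (Complex.I * n * p)) :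
    (n : ℂ) = ∑ m ∈ Finset.Icc (-(L : ℤ)) (L : ℤ),
      (m : ℂ) * Matrix.trace ((U m)ᴴ * U m) := by
  set T : Finset ℤ := Finset.Icc (-(L : ℤ)) (L : ℤ) with hT
  set Uhat' : ℝ → Matrix (Fin N) (Fin N) ℂ :=
    fun p => ∑ x ∈ T, (Complex.I * x * Complex.exp (Complex.I * p * x)) • U x with hUhat'
  -- entrywise derivative
  have hentry : ∀ (p : ℝ) (i j : Fin N),
      HasDerivAt (fun q => Uhat q i j) (Uhat' p i j) p := by
    intro p i j
    have hfun : (fun q => Uhat q i j)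
        = fun q : ℝ => ∑ x ∈ T, Complex.exp (Complex.I * q * x) * U x i j := by
      funext q
      rw [hUhat q]
      simp [Matrix.sum_apply, Matrix.smul_apply, smul_eq_mul]
    have hval : Uhat' p i j
        = ∑ x ∈ T, Complex.I * x * Complex.exp (Complex.I * p * x) * U x i j := by
      rw [hUhat']
      simp [Matrix.sum_apply, Matrix.smul_apply, smul_eq_mul]
    rw [hfun, hval]
    exact HasDerivAt.fun_sum fun x _ => (hasDerivAt_exp_I_mul x p).mul_const _
  -- unitarity facts
  have hstar : ∀ p : ℝ, (Uhat p)ᴴ * Uhat p = 1 := by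
    intro p
    have := Matrix.mem_unitaryGroup_iff'.mp (hunitary p)
    rwa [Matrix.star_eq_conjTranspose] at this
  have hdetne : ∀ p : ℝ, (Uhat p).det ≠ 0 := by
    intro p
    have h1 : (Uhat p)ᴴ.det * (Uhat p).det = 1 := by
      rw [← Matrix.det_mul, hstar p, Matrix.det_one]
    exact right_ne_zero_of_mul_eq_one h1
  have hCne : C ≠ 0 := by
    have h0 := hdet 0
    simp only [Complex.ofReal_zero, mul_zero, Complex.exp_zero, mul_one] at h0
    rw [← h0]
    exact hdetne 0
  have hadj : ∀ p : ℝ, Matrix.adjugate (Uhat p) = (Uhat p).det • (Uhat p)ᴴ := by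
    intro p
    have h1 : (Uhat p)ᴴ * (Uhat p * Matrix.adjugate (Uhat p))
        = (Uhat p)ᴴ * ((Uhat p).det • 1) := by rw [Matrix.mul_adjugate]
    rwa [← Matrix.mul_assoc, hstar p, Matrix.one_mul, Matrix.mul_smul, Matrix.mul_one] at h1
  -- key pointwise identity
  have key : ∀ p : ℝ, ((Uhat p)ᴴ * Uhat' p).trace = Complex.I * n := by
    intro p
    have hD := hasDerivAt_det' (A := Uhat) (A' := Uhat' p) (p := p) (hentry p)
    have hfun2 : (fun q : ℝ => (Uhat q).det)
        = fun q : ℝ => C * Complex.exp (Complex.I * q * n) := by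
      funext q
      rw [hdet q]
      ring_nf
    have hD2 : HasDerivAt (fun q : ℝ => (Uhat q).det)
        (C * (Complex.I * n * Complex.exp (Complex.I * p * n))) p := by
      rw [hfun2]
      exact (hasDerivAt_exp_I_mul n p).const_mul C
    have huniq := hD.unique hD2
    rw [hadj p, Matrix.smul_mul, Matrix.trace_smul, smul_eq_mul, hdet p] at huniq
    have hee : Complex.I * (p : ℂ) * (n : ℂ) = Complex.I * (n : ℂ) * (p : ℂ) := by ring
    rw [hee] at huniq
    have hne : C * Complex.exp (Complex.I * (n : ℂ) * (p : ℂ)) ≠ 0 :=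
      mul_ne_zero hCne (Complex.exp_ne_zero _)
    apply mul_left_cancel₀ hne
    rw [huniq]
    ring
  -- expansion of the trace
  have hexpand : ∀ p : ℝ, ((Uhat p)ᴴ * Uhat' p).trace
      = ∑ x ∈ T, ∑ y ∈ T, Complex.I * x * Complex.exp (Complex.I * p * ((x - y : ℤ) : ℂ))
          * ((U y)ᴴ * U x).trace := by
    intro p
    rw [hUhat p, hUhat']
    rw [Matrix.conjTranspose_sum]
    simp only [Matrix.conjTranspose_smul, Finset.sum_mul, Finset.mul_sum,
      Matrix.smul_mul, Matrix.mul_smul, Matrix.trace_sum, Matrix.trace_smul, smul_smul,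
      smul_eq_mul]
    refine Finset.sum_congr rfl fun x hx => Finset.sum_congr rfl fun y hy => ?_
    rw [exp_term' p x y]
  -- sample points
  set M : ℕ := 2 * L + 1 with hM
  have hMpos : 0 < M := by omega
  have hMneC : (M : ℂ) ≠ 0 := by exact_mod_cast hMpos.ne'
  set P : ℕ → ℝ := fun j => 2 * Real.pi * j / M with hP
  have hinner : ∀ x ∈ T, ∀ y ∈ T,
      (∑ j ∈ Finset.range M, Complex.exp (Complex.I * (P j : ℂ) * ((x - y : ℤ) : ℂ)))
        = if y = x then (M : ℂ) else 0 := by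
    intro x hx y hy
    by_cases hxy : y = x
    · subst hxy
      simp
    · rw [if_neg hxy]
      have hk : x - y ≠ 0 := sub_ne_zero.mpr (Ne.symm hxy)
      have hbound : (x - y).natAbs < M := by
        rw [hT] at hx hy
        simp only [Finset.mem_Icc] at hx hy
        omega
      exact sum_exp_eq M hMpos (x - y) hk hbound
  -- sum the key identity over the sample points
  have hsum : (M : ℂ) * (Complex.I * n)
      = ∑ x ∈ T, ∑ y ∈ T, Complex.I * x * ((U y)ᴴ * U x).trace *
          (if y = x then (M : ℂ) else 0) := by
    calc (M : ℂ) * (Complex.I * n)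
        = ∑ j ∈ Finset.range M, ((Uhat (P j))ᴴ * Uhat' (P j)).trace := by
          rw [Finset.sum_congr rfl fun j _ => key (P j)]
          simp [mul_comm]
      _ = ∑ j ∈ Finset.range M, ∑ x ∈ T, ∑ y ∈ T,
            Complex.I * x * Complex.exp (Complex.I * (P j : ℂ) * ((x - y : ℤ) : ℂ))
              * ((U y)ᴴ * U x).trace := Finset.sum_congr rfl fun j _ => hexpand (P j)
      _ = ∑ x ∈ T, ∑ y ∈ T, Complex.I * x * ((U y)ᴴ * U x).trace *
            ∑ j ∈ Finset.range M, Complex.exp (Complex.I * (P j : ℂ) * ((x - y : ℤ) : ℂ)) := by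
          rw [Finset.sum_comm]
          refine Finset.sum_congr rfl fun x _ => ?_
          rw [Finset.sum_comm]
          refine Finset.sum_congr rfl fun y _ => ?_
          rw [Finset.mul_sum]
          exact Finset.sum_congr rfl fun j _ => by ring
      _ = ∑ x ∈ T, ∑ y ∈ T, Complex.I * x * ((U y)ᴴ * U x).trace *
            (if y = x then (M : ℂ) else 0) := by
          refine Finset.sum_congr rfl fun x hx => Finset.sum_congr rfl fun y hy => ?_
          rw [hinner x hx y hy]
  have hdiag : ∑ x ∈ T, ∑ y ∈ T, Complex.I * x * ((U y)ᴴ * U x).trace *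
      (if y = x then (M : ℂ) else 0)
      = (M : ℂ) * ∑ m ∈ T, Complex.I * m * ((U m)ᴴ * U m).trace := by
    rw [Finset.mul_sum]
    refine Finset.sum_congr rfl fun x hx => ?_
    rw [Finset.sum_eq_single x]
    · rw [if_pos rfl]; ring
    · intro y _ hyx
      rw [if_neg hyx, mul_zero]
    · intro hxx
      exact absurd hx hxx
  rw [hdiag] at hsum
  have hfin : (M : ℂ) * Complex.I * (n : ℂ)
      = (M : ℂ) * Complex.I * ∑ m ∈ T, (m : ℂ) * ((U m)ᴴ * U m).trace := by
    calc (M : ℂ) * Complex.I * (n : ℂ) = (M : ℂ) * (Complex.I * n) := by ring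
      _ = (M : ℂ) * ∑ m ∈ T, Complex.I * m * ((U m)ᴴ * U m).trace := hsum
      _ = _ := by
          rw [Finset.mul_sum, Finset.mul_sum]
          exact Finset.sum_congr rfl fun m _ => by ring
  exact mul_left_cancel₀ (mul_ne_zero hMneC Complex.I_ne_zero) hfin
end

section
/- Let A₁ ⊆ B₁ ⊗ B₂ and A₂ ⊆ B₂ ⊗ B₃ be subalgebras such that A₁ ⊗ 1₃ and 1₁ ⊗ A₂ commute elementwise inside B₁ ⊗ B₂ ⊗ B₃. Then the support algebras Supp(A₁, B₂) and Supp(A₂, B₂) commute elementwise in B₂. -/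
set_option synthInstance.maxHeartbeats 1000000
set_option maxHeartbeats 1000000
open scoped TensorProduct

section Aux

variable {R M N : Type*} [CommRing R] [Ring M] [Ring N] [Algebra R M] [Algebra R N]

/-- right coefficient map `(φ ⊗ id)` -/
noncomputable def cfR (φ : M →ₗ[R] R) : M ⊗[R] N →ₗ[R] N :=
  (TensorProduct.lid R N).toLinearMap ∘ₗ LinearMap.rTensor N φ

/-- left coefficient map `(id ⊗ ψ)` -/
noncomputable def cfL (ψ : N →ₗ[R] R) : M ⊗[R] N →ₗ[R] M :=
  (TensorProduct.rid R M).toLinearMap ∘ₗ LinearMap.lTensor M ψ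

@[simp] lemma cfR_tmul (φ : M →ₗ[R] R) (x : M) (y : N) :
    cfR (N := N) φ (x ⊗ₜ y) = φ x • y := by
  simp [cfR]

@[simp] lemma cfL_tmul (ψ : N →ₗ[R] R) (x : M) (y : N) :
    cfL (M := M) ψ (x ⊗ₜ y) = ψ y • x := by
  simp [cfL]

lemma sum_tmul_cfR {ι : Type*} [Fintype ι] (b : Module.Basis ι R M) (x : M ⊗[R] N) :
    x = ∑ i, b i ⊗ₜ[R] (cfR (b.coord i) x) := by
  induction x with
  | zero => simp
  | tmul m n =>
      have : ∑ i, b i ⊗ₜ[R] (cfR (N := N) (b.coord i) (m ⊗ₜ n))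
          = ∑ i, (b.repr m i • b i) ⊗ₜ[R] n := by
        refine Finset.sum_congr rfl fun i _ => ?_
        simp [TensorProduct.smul_tmul, Module.Basis.coord_apply]
      rw [this, ← TensorProduct.sum_tmul, b.sum_repr]
  | add u v hu hv =>
      conv_lhs => rw [hu, hv]
      simp [TensorProduct.tmul_add, Finset.sum_add_distrib]

lemma sum_cfL_tmul {ι : Type*} [Fintype ι] (c : Module.Basis ι R N) (x : M ⊗[R] N) :
    x = ∑ i, (cfL (c.coord i) x) ⊗ₜ[R] c i := by
  induction x with
  | zero => simp
  | tmul m n =>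
      have : ∑ i, (cfL (M := M) (c.coord i) (m ⊗ₜ n)) ⊗ₜ[R] c i
          = ∑ i, m ⊗ₜ[R] (c.repr n i • c i) := by
        refine Finset.sum_congr rfl fun i _ => ?_
        simp [TensorProduct.smul_tmul, Module.Basis.coord_apply]
      rw [this, ← TensorProduct.tmul_sum, c.sum_repr]
  | add u v hu hv =>
      conv_lhs => rw [hu, hv]
      simp [TensorProduct.add_tmul, Finset.sum_add_distrib]

end Aux

section Key

variable {R B₁ B₂ B₃ : Type*} [CommRing R] [Ring B₁] [Ring B₂] [Ring B₃]
  [Algebra R B₁] [Algebra R B₂] [Algebra R B₃]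

/-- the full coefficient extraction map `φ ⊗ id ⊗ ψ` -/
noncomputable def Phi (φ : B₁ →ₗ[R] R) (ψ : B₃ →ₗ[R] R) :
    (B₁ ⊗[R] B₂) ⊗[R] B₃ →ₗ[R] B₂ :=
  cfL ψ ∘ₗ LinearMap.rTensor B₃ (cfR φ)

lemma Phi_mul₁ (φ : B₁ →ₗ[R] R) (ψ : B₃ →ₗ[R] R) (a₁ : B₁ ⊗[R] B₂) (a₂ : B₂ ⊗[R] B₃) :
    Phi φ ψ ((Algebra.TensorProduct.includeLeft (S := R) a₁) *
      ((Algebra.TensorProduct.assoc R R R B₁ B₂ B₃).symm.toAlgHom.comp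
        Algebra.TensorProduct.includeRight a₂))
      = cfR φ a₁ * cfL ψ a₂ := by
  induction a₁ with
  | zero => simp
  | add u v hu hv => simp only [map_add, add_mul, hu, hv]
  | tmul x y =>
      induction a₂ with
      | zero => simp
      | add u v hu hv => simp only [map_add, mul_add, hu, hv]
      | tmul u v =>
          simp only [Algebra.TensorProduct.includeLeft_apply,
            Algebra.TensorProduct.includeRight_apply, AlgHom.comp_apply,
            AlgEquiv.toAlgHom_eq_coe, AlgHom.coe_coe, AlgEquiv.coe_toAlgHom,
            Algebra.TensorProduct.assoc_symm_tmul]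
          rw [Algebra.TensorProduct.tmul_mul_tmul, Algebra.TensorProduct.tmul_mul_tmul]
          simp only [Phi, LinearMap.comp_apply, LinearMap.rTensor_tmul, cfR_tmul, cfL_tmul,
            mul_one, one_mul]
          simp [smul_smul, smul_mul_assoc, mul_smul_comm, mul_comm]

lemma Phi_mul₂ (φ : B₁ →ₗ[R] R) (ψ : B₃ →ₗ[R] R) (a₁ : B₁ ⊗[R] B₂) (a₂ : B₂ ⊗[R] B₃) :
    Phi φ ψ (((Algebra.TensorProduct.assoc R R R B₁ B₂ B₃).symm.toAlgHom.comp
        Algebra.TensorProduct.includeRight a₂) *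
      (Algebra.TensorProduct.includeLeft (S := R) a₁))
      = cfL ψ a₂ * cfR φ a₁ := by
  induction a₁ with
  | zero => simp
  | add u v hu hv => simp only [map_add, mul_add, add_mul, hu, hv]
  | tmul x y =>
      induction a₂ with
      | zero => simp
      | add u v hu hv => simp only [map_add, add_mul, mul_add, hu, hv]
      | tmul u v =>
          simp only [Algebra.TensorProduct.includeLeft_apply,
            Algebra.TensorProduct.includeRight_apply, AlgHom.comp_apply,
            AlgEquiv.toAlgHom_eq_coe, AlgHom.coe_coe, AlgEquiv.coe_toAlgHom,
            Algebra.TensorProduct.assoc_symm_tmul]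
          rw [Algebra.TensorProduct.tmul_mul_tmul, Algebra.TensorProduct.tmul_mul_tmul]
          simp only [Phi, LinearMap.comp_apply, LinearMap.rTensor_tmul, cfR_tmul, cfL_tmul,
            mul_one, one_mul]
          simp [smul_smul, smul_mul_assoc, mul_smul_comm, mul_comm]

end Key

/-- If `A₁ ⊆ B₁ ⊗ B₂` and `A₂ ⊆ B₂ ⊗ B₃` are subalgebras whose natural
images `A₁ ⊗ 1₃` and `1₁ ⊗ A₂` commute elementwise inside `B₁ ⊗ B₂ ⊗ B₃`, then the
support algebras `Supp(A₁, B₂)` and `Supp(A₂, B₂)` commute elementwise in `B₂`. -/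
theorem support_algebras_commute
    {d₁ d₂ d₃ : ℕ}
    (A₁ : Subalgebra ℂ (Matrix (Fin d₁) (Fin d₁) ℂ ⊗[ℂ] Matrix (Fin d₂) (Fin d₂) ℂ))
    (A₂ : Subalgebra ℂ (Matrix (Fin d₂) (Fin d₂) ℂ ⊗[ℂ] Matrix (Fin d₃) (Fin d₃) ℂ))
    (ι₁ : (Matrix (Fin d₁) (Fin d₁) ℂ ⊗[ℂ] Matrix (Fin d₂) (Fin d₂) ℂ) →ₐ[ℂ]
      ((Matrix (Fin d₁) (Fin d₁) ℂ ⊗[ℂ] Matrix (Fin d₂) (Fin d₂) ℂ) ⊗[ℂ]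
        Matrix (Fin d₃) (Fin d₃) ℂ))
    (hι₁ : ι₁ = Algebra.TensorProduct.includeLeft)
    (ι₂ : (Matrix (Fin d₂) (Fin d₂) ℂ ⊗[ℂ] Matrix (Fin d₃) (Fin d₃) ℂ) →ₐ[ℂ]
      ((Matrix (Fin d₁) (Fin d₁) ℂ ⊗[ℂ] Matrix (Fin d₂) (Fin d₂) ℂ) ⊗[ℂ]
        Matrix (Fin d₃) (Fin d₃) ℂ))
    (hι₂ : ι₂ = ((Algebra.TensorProduct.assoc ℂ ℂ ℂ (Matrix (Fin d₁) (Fin d₁) ℂ)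
        (Matrix (Fin d₂) (Fin d₂) ℂ) (Matrix (Fin d₃) (Fin d₃) ℂ)).symm.toAlgHom.comp
        Algebra.TensorProduct.includeRight))
    (hcomm : ∀ a₁ ∈ A₁, ∀ a₂ ∈ A₂, ι₁ a₁ * ι₂ a₂ = ι₂ a₂ * ι₁ a₁) :
    ∀ x ∈ sInf {C : Subalgebra ℂ (Matrix (Fin d₂) (Fin d₂) ℂ) |
        ∀ a ∈ A₁, a ∈ (Algebra.TensorProduct.map
          (AlgHom.id ℂ (Matrix (Fin d₁) (Fin d₁) ℂ)) C.val).range},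
      ∀ y ∈ sInf {C : Subalgebra ℂ (Matrix (Fin d₂) (Fin d₂) ℂ) |
        ∀ a ∈ A₂, a ∈ (Algebra.TensorProduct.map C.val
          (AlgHom.id ℂ (Matrix (Fin d₃) (Fin d₃) ℂ))).range},
        x * y = y * x := by
  set B₁ := Matrix (Fin d₁) (Fin d₁) ℂ
  set B₂ := Matrix (Fin d₂) (Fin d₂) ℂ
  set B₃ := Matrix (Fin d₃) (Fin d₃) ℂ
  -- coefficient sets
  set S₁ : Set B₂ := {m | ∃ a ∈ A₁, ∃ φ : B₁ →ₗ[ℂ] ℂ, m = cfR φ a} with hS₁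
  set S₂ : Set B₂ := {m | ∃ a ∈ A₂, ∃ ψ : B₃ →ₗ[ℂ] ℂ, m = cfL ψ a} with hS₂
  set D₁ : Subalgebra ℂ B₂ := Algebra.adjoin ℂ S₁ with hD₁
  set D₂ : Subalgebra ℂ B₂ := Algebra.adjoin ℂ S₂ with hD₂
  -- coefficients commute
  have key : ∀ m₁ ∈ S₁, ∀ m₂ ∈ S₂, m₁ * m₂ = m₂ * m₁ := by
    rintro _ ⟨a₁, ha₁, φ, rfl⟩ _ ⟨a₂, ha₂, ψ, rfl⟩
    have h := hcomm a₁ ha₁ a₂ ha₂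
    rw [hι₁, hι₂] at h
    have := congrArg (Phi φ ψ) h
    rwa [Phi_mul₁, Phi_mul₂] at this
  -- D₁ is in the first set
  have hD₁mem : D₁ ∈ {C : Subalgebra ℂ B₂ |
      ∀ a ∈ A₁, a ∈ (Algebra.TensorProduct.map (AlgHom.id ℂ B₁) C.val).range} := by
    intro a ha
    have inst : Module.Finite ℂ B₁ := by infer_instance
    let b := Module.finBasis ℂ B₁
    refine ⟨∑ i, b i ⊗ₜ[ℂ] (⟨cfR (b.coord i) a,
      Algebra.subset_adjoin ⟨a, ha, b.coord i, rfl⟩⟩ : D₁), ?_⟩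
    rw [map_sum]
    simp only [AlgHom.toRingHom_eq_coe, RingHom.coe_coe, Algebra.TensorProduct.map_tmul,
      AlgHom.coe_id, id_eq, Subalgebra.coe_val]
    exact (sum_tmul_cfR b a).symm
  have hD₂mem : D₂ ∈ {C : Subalgebra ℂ B₂ |
      ∀ a ∈ A₂, a ∈ (Algebra.TensorProduct.map C.val (AlgHom.id ℂ B₃)).range} := by
    intro a ha
    let c := Module.finBasis ℂ B₃
    refine ⟨∑ i, (⟨cfL (c.coord i) a,
      Algebra.subset_adjoin ⟨a, ha, c.coord i, rfl⟩⟩ : D₂) ⊗ₜ[ℂ] c i, ?_⟩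
    rw [map_sum]
    simp only [AlgHom.toRingHom_eq_coe, RingHom.coe_coe, Algebra.TensorProduct.map_tmul,
      AlgHom.coe_id, id_eq, Subalgebra.coe_val]
    exact (sum_cfL_tmul c a).symm
  intro x hx y hy
  have hxD : x ∈ D₁ := sInf_le hD₁mem hx
  have hyD : y ∈ D₂ := sInf_le hD₂mem hy
  -- D₂ ≤ centralizer S₁
  have h2 : D₂ ≤ Subalgebra.centralizer ℂ S₁ := by
    rw [hD₂]
    refine Algebra.adjoin_le ?_
    intro m₂ hm₂
    rw [SetLike.mem_coe, Subalgebra.mem_centralizer_iff]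
    intro m₁ hm₁
    exact key m₁ hm₁ m₂ hm₂
  -- D₁ ≤ centralizer D₂
  have h1 : D₁ ≤ Subalgebra.centralizer ℂ (D₂ : Set B₂) := by
    rw [hD₁]
    refine Algebra.adjoin_le ?_
    intro m₁ hm₁
    rw [SetLike.mem_coe, Subalgebra.mem_centralizer_iff]
    intro z hz
    exact ((Subalgebra.mem_centralizer_iff (R := ℂ)).mp (h2 hz) m₁ hm₁).symm
  exact ((Subalgebra.mem_centralizer_iff (R := ℂ)).mp (h1 hxD) y hyD).symm
end

section
/- Let R₁ and R₂ be commuting unital subalgebras of M_d(ℂ), with R₁ ≅ M_{r₁}(ℂ) and R₂ ≅ M_{r₂}(ℂ), such that R₁ and R₂ together generate M_d(ℂ). Then d = r₁ · r₂ and the algebra generated by R₁ and R₂ is isomorphic to R₁ ⊗ R₂. -/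
open scoped TensorProduct

set_option maxHeartbeats 1000000 in
set_option synthInstance.maxHeartbeats 400000 in
private theorem commuting_full_matrix_algebras_aux
    {d r₁ r₂ : ℕ}
    (R₁ R₂ : Subalgebra ℂ (Matrix (Fin d) (Fin d) ℂ))
    (e₁ : R₁ ≃ₐ[ℂ] Matrix (Fin r₁) (Fin r₁) ℂ)
    (e₂ : R₂ ≃ₐ[ℂ] Matrix (Fin r₂) (Fin r₂) ℂ)
    (hcomm : ∀ (x : R₁) (y : R₂),
      Commute (x : Matrix (Fin d) (Fin d) ℂ) (y : Matrix (Fin d) (Fin d) ℂ))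
    (hgen : R₁ ⊔ R₂ = ⊤) :
    d = r₁ * r₂ ∧
    Function.Bijective (Algebra.TensorProduct.lift R₁.val R₂.val hcomm) := by
  set φ := Algebra.TensorProduct.lift R₁.val R₂.val hcomm with hφ
  -- the algebra equivalence R₁ ⊗ R₂ ≃ Matrix (Fin r₂ × Fin r₁)
  let E : (R₁ ⊗[ℂ] R₂) ≃ₐ[ℂ] Matrix (Fin r₂ × Fin r₁) (Fin r₂ × Fin r₁) ℂ :=
    (Algebra.TensorProduct.congr e₁ e₂).trans <|
      ((matrixEquivTensor (Fin r₂) ℂ (Matrix (Fin r₁) (Fin r₁) ℂ)).symm.trans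
        (Matrix.compAlgEquiv (Fin r₂) (Fin r₁) ℂ ℂ))
  -- surjectivity
  have hsurj : Function.Surjective φ := by
    have hrange : φ.range = ⊤ := by
      rw [eq_top_iff, ← hgen]
      apply sup_le
      · intro x hx
        exact ⟨(⟨x, hx⟩ : R₁) ⊗ₜ[ℂ] (1 : R₂), by
          exact (Algebra.TensorProduct.lift_tmul R₁.val R₂.val hcomm _ _).trans (by simp)⟩
      · intro y hy
        exact ⟨(1 : R₁) ⊗ₜ[ℂ] (⟨y, hy⟩ : R₂), by
          exact (Algebra.TensorProduct.lift_tmul R₁.val R₂.val hcomm _ _).trans (by simp)⟩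
    intro y
    have : y ∈ φ.range := hrange ▸ Algebra.mem_top
    exact this
  rcases Nat.eq_zero_or_pos d with hd | hd
  · -- degenerate case `d = 0`
    subst hd
    have hsub : Subsingleton (Matrix (Fin 0) (Fin 0) ℂ) := inferInstance
    have hr₁ : r₁ = 0 := by
      by_contra h
      haveI : Nonempty (Fin r₁) := ⟨⟨0, Nat.pos_of_ne_zero h⟩⟩
      haveI : Nontrivial (Matrix (Fin r₁) (Fin r₁) ℂ) := inferInstance
      haveI : Nontrivial R₁ := e₁.toEquiv.nontrivial
      have : Nontrivial (Matrix (Fin 0) (Fin 0) ℂ) := by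
        obtain ⟨⟨a, _⟩, ⟨b, _⟩, hab⟩ := ‹Nontrivial R₁›
        exact ⟨a, b, fun h => hab (Subtype.ext h)⟩
      exact not_subsingleton _ hsub
    refine ⟨by simp [hr₁], ?_, hsurj⟩
    -- injectivity: both sides are subsingletons
    haveI : IsEmpty (Fin r₂ × Fin r₁) := by subst hr₁; infer_instance
    haveI : Subsingleton (Matrix (Fin r₂ × Fin r₁) (Fin r₂ × Fin r₁) ℂ) := inferInstance
    haveI hdom : Subsingleton (R₁ ⊗[ℂ] R₂) := E.toEquiv.subsingleton
    intro a b _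
    exact Subsingleton.elim a b
  · -- main case `0 < d`
    haveI hne : Nontrivial (Matrix (Fin d) (Fin d) ℂ) := by
      haveI : Nonempty (Fin d) := ⟨⟨0, hd⟩⟩
      infer_instance
    -- the index type is nonempty, so the matrix ring is simple
    haveI hr : Nonempty (Fin r₂ × Fin r₁) := by
      by_contra h
      rw [not_nonempty_iff] at h
      haveI : Subsingleton (Matrix (Fin r₂ × Fin r₁) (Fin r₂ × Fin r₁) ℂ) := inferInstance
      haveI hdom : Subsingleton (R₁ ⊗[ℂ] R₂) := E.toEquiv.subsingleton
      obtain ⟨x, y, hxy⟩ := hne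
      obtain ⟨a, ha⟩ := hsurj x
      obtain ⟨b, hb⟩ := hsurj y
      exact hxy (ha ▸ hb ▸ congrArg φ (Subsingleton.elim a b))
    have hinj : Function.Injective φ := by
      have h1 : Function.Injective ((φ.comp E.symm.toAlgHom).toRingHom) :=
        RingHom.injective _
      have h2 : Function.Injective (φ ∘ E.symm) := h1
      have h3 := h2.comp E.symm.symm.injective
      simpa [Function.comp] using h3
    refine ⟨?_, hinj, hsurj⟩
    -- dimension count
    have hlin : Module.finrank ℂ (R₁ ⊗[ℂ] R₂) =
        Module.finrank ℂ (Matrix (Fin d) (Fin d) ℂ) :=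
      (LinearEquiv.ofBijective φ.toLinearMap ⟨hinj, hsurj⟩).finrank_eq
    have hlin2 := LinearEquiv.finrank_eq E.toLinearEquiv
    rw [Module.finrank_matrix] at hlin2
    have hmd : Module.finrank ℂ (Matrix (Fin d) (Fin d) ℂ) = d * d := by
      rw [Module.finrank_matrix]; simp
    have key : d * d = (r₁ * r₂) * (r₁ * r₂) := by
      have h4 := hlin.symm.trans hlin2
      rw [hmd] at h4
      simpa [Fintype.card_prod, Fintype.card_fin, mul_comm, mul_left_comm, mul_assoc] using h4
    exact Nat.mul_self_inj.mp key

/-- Let `R₁, R₂` be commuting unital subalgebras of `M_d(ℂ)`, with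
`R₁ ≅ M_{r₁}(ℂ)` and `R₂ ≅ M_{r₂}(ℂ)`, which together generate `M_d(ℂ)`.  Then
`d = r₁ · r₂` and the multiplication map `R₁ ⊗ R₂ → M_d(ℂ)` is an isomorphism onto the
algebra generated by `R₁` and `R₂` (i.e. it is bijective). -/
theorem commuting_full_matrix_algebras
    {d r₁ r₂ : ℕ}
    (R₁ R₂ : Subalgebra ℂ (Matrix (Fin d) (Fin d) ℂ))
    (e₁ : R₁ ≃ₐ[ℂ] Matrix (Fin r₁) (Fin r₁) ℂ)
    (e₂ : R₂ ≃ₐ[ℂ] Matrix (Fin r₂) (Fin r₂) ℂ)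
    (hcomm : ∀ (x : R₁) (y : R₂),
      Commute (x : Matrix (Fin d) (Fin d) ℂ) (y : Matrix (Fin d) (Fin d) ℂ))
    (hgen : R₁ ⊔ R₂ = ⊤) :
    d = r₁ * r₂ ∧
    Function.Bijective (Algebra.TensorProduct.lift R₁.val R₂.val hcomm) :=
  commuting_full_matrix_algebras_aux R₁ R₂ e₁ e₂ hcomm hgen
end
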